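/- arXiv:2311.01027 — 5 statements merged into one kernel-verified Lean document; each statement's English description precedes it below -/
import Mathlib

section
/- Let δ > 0, θ ∈ (0,2], μ ≥ 0, κ > 0, and set ε₀ = min{(κ/(2(μ+κ)δθ))^{1/(2θ)}, 1}. Then for all r with 0 < r ≤ ε₀, the derivative of f(r) = sqrt((μ r^4 + κ r^2)/(1 + δ r^{2θ})) satisfies f'(r) ≥ κ / (2 (μ+κ)^{1/2} (1+δ)^{3/2}); in particular f'(r) > 0 and 1/f'(r) is bounded by a constant depending only on δ, θ, μ, κ. -/
set_option maxHeartbeats 1000000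

theorem stmt4 (δ θ μ κ : ℝ) (hδ : 0 < δ) (hθ : 0 < θ) (hθ2 : θ ≤ 2)
    (hμ : 0 ≤ μ) (hκ : 0 < κ)
    (f : ℝ → ℝ)
    (hf : ∀ r : ℝ, f r = Real.sqrt ((μ * r ^ 4 + κ * r ^ 2) / (1 + δ * r ^ (2 * θ))))
    (ε₀ : ℝ) (hε₀ : ε₀ = min ((κ / (2 * (μ + κ) * δ * θ)) ^ (1 / (2 * θ))) 1)
    (r : ℝ) (hr : 0 < r) (hrε : r ≤ ε₀) :
    0 < deriv f r ∧
      κ / (2 * (μ + κ) ^ ((1 : ℝ) / 2) * (1 + δ) ^ ((3 : ℝ) / 2)) ≤ deriv f r := by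
  have hr0 : r ≠ 0 := ne_of_gt hr
  have hμκ : 0 < μ + κ := by linarith
  have hrpow_pos : 0 < r ^ (2 * θ) := Real.rpow_pos_of_pos hr _
  set A : ℝ := 1 + δ * r ^ (2 * θ) with hAdef
  have hA_pos : 0 < A := by positivity
  have hA_ne : A ≠ 0 := ne_of_gt hA_pos
  have hA1 : 1 ≤ A := le_add_of_nonneg_right (by positivity)
  have hr1 : r ≤ 1 := hrε.trans (hε₀ ▸ min_le_right _ _)
  have hrpow_le1 : r ^ (2 * θ) ≤ 1 := Real.rpow_le_one hr.le hr1 (by positivity)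
  have hA_le : A ≤ 1 + δ := by nlinarith
  set C : ℝ := κ / (2 * (μ + κ) * δ * θ) with hCdef
  have hC_pos : 0 < C := by positivity
  have hrC : r ≤ C ^ (1 / (2 * θ)) := hrε.trans (hε₀ ▸ min_le_left _ _)
  have hrpowC : r ^ (2 * θ) ≤ C := by
    calc r ^ (2 * θ) ≤ (C ^ (1 / (2 * θ))) ^ (2 * θ) :=
          Real.rpow_le_rpow hr.le hrC (by positivity)
      _ = C := by
          rw [← Real.rpow_mul hC_pos.le, one_div,
            inv_mul_cancel₀ (by positivity : (2 * θ) ≠ 0), Real.rpow_one]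
  -- derivative of the numerator
  have hnum : HasDerivAt (fun x : ℝ => μ * x ^ 4 + κ * x ^ 2)
      (μ * (4 * r ^ 3) + κ * (2 * r)) r := by
    have h1 := (hasDerivAt_pow 4 r).const_mul μ
    have h2 := (hasDerivAt_pow 2 r).const_mul κ
    have h3 := h1.add h2
    norm_num at h3
    exact h3
    try ring
  -- derivative of the denominator
  have hden : HasDerivAt (fun x : ℝ => 1 + δ * x ^ (2 * θ))
      (δ * (2 * θ * r ^ (2 * θ - 1))) r := by
    have h := (Real.hasDerivAt_rpow_const (p := 2 * θ) (Or.inl hr0)).const_mul δ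
    exact h.const_add 1
  set N : ℝ := (μ * (4 * r ^ 3) + κ * (2 * r)) * A -
      (μ * r ^ 4 + κ * r ^ 2) * (δ * (2 * θ * r ^ (2 * θ - 1))) with hNdef
  have hg : HasDerivAt (fun x : ℝ => (μ * x ^ 4 + κ * x ^ 2) / (1 + δ * x ^ (2 * θ)))
      (N / A ^ 2) r := hnum.div hden hA_ne
  have hgr_pos : 0 < (μ * r ^ 4 + κ * r ^ 2) / A := by
    apply div_pos _ hA_pos
    have := mul_pos hκ (pow_pos hr 2)
    nlinarith [mul_nonneg hμ (pow_nonneg hr.le 4)]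
  set s : ℝ := Real.sqrt ((μ * r ^ 4 + κ * r ^ 2) / A) with hsdef
  have hs_pos : 0 < s := Real.sqrt_pos.mpr hgr_pos
  have hfd : HasDerivAt f (1 / (2 * s) * (N / A ^ 2)) r := by
    have hs := (Real.hasDerivAt_sqrt (ne_of_gt hgr_pos)).comp r hg
    have hfeq : f = fun x => Real.sqrt ((μ * x ^ 4 + κ * x ^ 2) / (1 + δ * x ^ (2 * θ))) :=
      funext hf
    rw [hfeq]
    exact hs
  have hderiv : deriv f r = N / (2 * s * A ^ 2) := by
    rw [hfd.deriv, one_div, inv_mul_eq_div, div_div, mul_comm (A ^ 2) (2 * s)]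
  clear_value A C N s
  -- key bound on N
  have hrr : r ^ (2 * θ - 1) * r = r ^ (2 * θ) := by
    rw [← Real.rpow_add_one hr0, sub_add_cancel]
  have hCval : 2 * (μ + κ) * δ * θ * C = κ := by
    rw [hCdef]; field_simp
  have hr2 : r ^ 2 ≤ 1 := by nlinarith
  have hkey : (μ * r ^ 4 + κ * r ^ 2) * (δ * (2 * θ * r ^ (2 * θ - 1))) ≤ κ * r := by
    have e : (μ * r ^ 4 + κ * r ^ 2) * (δ * (2 * θ * r ^ (2 * θ - 1)))
        = (μ * r ^ 2 + κ) * r ^ (2 * θ) * (2 * δ * θ * r) := by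
      rw [← hrr]; ring
    rw [e]
    have h1 : μ * r ^ 2 + κ ≤ μ + κ := by nlinarith [mul_nonneg hμ (sq_nonneg r)]
    calc (μ * r ^ 2 + κ) * r ^ (2 * θ) * (2 * δ * θ * r)
        ≤ (μ + κ) * C * (2 * δ * θ * r) := by
          have hpos : 0 ≤ 2 * δ * θ * r := by positivity
          exact mul_le_mul_of_nonneg_right
            (mul_le_mul h1 hrpowC hrpow_pos.le hμκ.le) hpos
      _ = κ * r := by linear_combination r * hCval
  have hN : κ * r ≤ N := by
    have h1 : 0 ≤ μ * (4 * r ^ 3) * A := by positivity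
    have h2 : 0 ≤ 2 * κ * r * (A - 1) := by
      apply mul_nonneg (by positivity) (by linarith)
    rw [hNdef]; nlinarith [hkey]
  -- bounds on sqrt terms
  have hsA : s * Real.sqrt A = Real.sqrt (μ * r ^ 4 + κ * r ^ 2) := by
    rw [hsdef, ← Real.sqrt_mul hgr_pos.le, div_mul_cancel₀ _ hA_ne]
  have hnum_le : μ * r ^ 4 + κ * r ^ 2 ≤ (μ + κ) * r ^ 2 := by
    nlinarith [mul_nonneg (mul_nonneg hμ (sq_nonneg r)) (by nlinarith : (0:ℝ) ≤ 1 - r ^ 2)]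
  have hsnum : Real.sqrt (μ * r ^ 4 + κ * r ^ 2) ≤ r * Real.sqrt (μ + κ) := by
    have h : Real.sqrt ((μ + κ) * r ^ 2) = Real.sqrt (μ + κ) * r := by
      rw [Real.sqrt_mul hμκ.le, Real.sqrt_sq hr.le]
    calc Real.sqrt (μ * r ^ 4 + κ * r ^ 2) ≤ Real.sqrt ((μ + κ) * r ^ 2) :=
          Real.sqrt_le_sqrt hnum_le
      _ = r * Real.sqrt (μ + κ) := by rw [h]; ring
  have hsqrtA_le : Real.sqrt A ≤ Real.sqrt (1 + δ) := Real.sqrt_le_sqrt hA_le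
  have hmulA : Real.sqrt A * Real.sqrt A = A := Real.mul_self_sqrt hA_pos.le
  have hS : (μ + κ) ^ ((1 : ℝ) / 2) = Real.sqrt (μ + κ) := (Real.sqrt_eq_rpow (μ + κ)).symm
  have hT : (1 + δ) ^ ((3 : ℝ) / 2) = (1 + δ) * Real.sqrt (1 + δ) := by
    have h1δ : (0:ℝ) < 1 + δ := by linarith
    rw [show (3 : ℝ) / 2 = 1 + 1 / 2 by norm_num, Real.rpow_add h1δ, Real.rpow_one,
      Real.sqrt_eq_rpow]
  have hsqrt1δ_pos : 0 < Real.sqrt (1 + δ) := Real.sqrt_pos.mpr (by linarith)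
  have hsqrtμκ_pos : 0 < Real.sqrt (μ + κ) := Real.sqrt_pos.mpr hμκ
  have e12 : s * A ^ 2 ≤ r * Real.sqrt (μ + κ) * (Real.sqrt (1 + δ) * (1 + δ)) := by
    calc s * A ^ 2 = (s * Real.sqrt A) * (Real.sqrt A * A) := by
          rw [show s * Real.sqrt A * (Real.sqrt A * A)
              = s * (Real.sqrt A * Real.sqrt A) * A by ring, hmulA]; ring
      _ ≤ r * Real.sqrt (μ + κ) * (Real.sqrt (1 + δ) * (1 + δ)) := by
          rw [hsA]
          exact mul_le_mul hsnum
            (mul_le_mul hsqrtA_le hA_le hA_pos.le hsqrt1δ_pos.le)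
            (by positivity) (by positivity)
  have hmain : κ / (2 * Real.sqrt (μ + κ) * ((1 + δ) * Real.sqrt (1 + δ)))
      ≤ N / (2 * s * A ^ 2) := by
    rw [div_le_div_iff₀ (by positivity) (by positivity)]
    have h3 := mul_le_mul_of_nonneg_left e12 (show (0:ℝ) ≤ 2 * κ by linarith)
    have h4 := mul_le_mul_of_nonneg_right hN
      (show (0:ℝ) ≤ 2 * Real.sqrt (μ + κ) * ((1 + δ) * Real.sqrt (1 + δ)) by positivity)
    nlinarith [h3, h4]
  have hfinal : κ / (2 * (μ + κ) ^ ((1 : ℝ) / 2) * (1 + δ) ^ ((3 : ℝ) / 2)) ≤ deriv f r := by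
    rw [hS, hT, hderiv]
    exact hmain
  refine ⟨lt_of_lt_of_le ?_ hfinal, hfinal⟩
  have hSpos : (0:ℝ) < (μ + κ) ^ ((1 : ℝ) / 2) := Real.rpow_pos_of_pos hμκ _
  have hTpos : (0:ℝ) < (1 + δ) ^ ((3 : ℝ) / 2) := Real.rpow_pos_of_pos (by linarith) _
  positivity
end

section
/- Let δ > 0, θ ∈ (0,2], μ ≥ 0, κ > 0, and ε₀ = min{(κ/(2(μ+κ)δθ))^{1/(2θ)}, 1}. Then there exists a constant C > 0 depending only on δ, θ, μ, κ such that |f''(r)| ≤ C(1 + 1/r) for all 0 < r ≤ ε₀, where f(r) = sqrt((μ r^4 + κ r^2)/(1 + δ r^{2θ})). -/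
open Real

noncomputable section S5aux

def S5P (μ κ x : ℝ) : ℝ := μ * x ^ 4 + κ * x ^ 2
def S5P' (μ κ x : ℝ) : ℝ := μ * (4 * x ^ 3) + κ * (2 * x)
def S5P'' (μ κ x : ℝ) : ℝ := μ * (12 * x ^ 2) + κ * 2
def S5H (δ θ x : ℝ) : ℝ := 1 + δ * x ^ (2 * θ)
def S5H' (δ θ x : ℝ) : ℝ := δ * (2 * θ * x ^ (2 * θ - 1))
def S5H'' (δ θ x : ℝ) : ℝ := δ * (2 * θ * ((2 * θ - 1) * x ^ (2 * θ - 1 - 1)))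
def S5G (δ θ μ κ x : ℝ) : ℝ := S5P μ κ x / S5H δ θ x
def S5N (δ θ μ κ x : ℝ) : ℝ := S5P' μ κ x * S5H δ θ x - S5P μ κ x * S5H' δ θ x
def S5G' (δ θ μ κ x : ℝ) : ℝ := S5N δ θ μ κ x / S5H δ θ x ^ 2
def S5N' (δ θ μ κ x : ℝ) : ℝ :=
  (S5P'' μ κ x * S5H δ θ x + S5P' μ κ x * S5H' δ θ x)
    - (S5P' μ κ x * S5H' δ θ x + S5P μ κ x * S5H'' δ θ x)
def S5G'' (δ θ μ κ x : ℝ) : ℝ :=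
  (S5N' δ θ μ κ x * S5H δ θ x ^ 2 - S5N δ θ μ κ x * (2 * S5H δ θ x * S5H' δ θ x))
    / (S5H δ θ x ^ 2) ^ 2
def S5F1 (δ θ μ κ x : ℝ) : ℝ := S5G' δ θ μ κ x / (2 * Real.sqrt (S5G δ θ μ κ x))
def S5F2 (δ θ μ κ x : ℝ) : ℝ :=
  (S5G'' δ θ μ κ x * (2 * Real.sqrt (S5G δ θ μ κ x))
    - S5G' δ θ μ κ x * (2 * (S5G' δ θ μ κ x / (2 * Real.sqrt (S5G δ θ μ κ x)))))
    / (2 * Real.sqrt (S5G δ θ μ κ x)) ^ 2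

variable {δ θ μ κ x : ℝ}

lemma S5H_pos (hδ : 0 < δ) (hx : 0 < x) : 0 < S5H δ θ x := by
  have : 0 < x ^ (2 * θ) := Real.rpow_pos_of_pos hx _
  unfold S5H; nlinarith

lemma S5P_pos (hμ : 0 ≤ μ) (hκ : 0 < κ) (hx : 0 < x) : 0 < S5P μ κ x := by
  unfold S5P; nlinarith [pow_pos hx 2, pow_pos hx 4]

lemma S5G_pos (hδ : 0 < δ) (hμ : 0 ≤ μ) (hκ : 0 < κ) (hx : 0 < x) : 0 < S5G δ θ μ κ x :=
  div_pos (S5P_pos hμ hκ hx) (S5H_pos hδ hx)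

lemma S5hasP : HasDerivAt (fun y => S5P μ κ y) (S5P' μ κ x) x := by
  have h := ((hasDerivAt_pow 4 x).const_mul μ).add ((hasDerivAt_pow 2 x).const_mul κ)
  refine h.congr_deriv ?_
  push_cast; unfold S5P'; ring

lemma S5hasP' : HasDerivAt (fun y => S5P' μ κ y) (S5P'' μ κ x) x := by
  have h := (((hasDerivAt_pow 3 x).const_mul (4:ℝ)).const_mul μ).add
    (((hasDerivAt_id x).const_mul (2:ℝ)).const_mul κ)
  refine h.congr_deriv ?_
  push_cast; unfold S5P''; ring

lemma S5hasH (hx : x ≠ 0) : HasDerivAt (fun y => S5H δ θ y) (S5H' δ θ x) x := by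
  have h := ((Real.hasDerivAt_rpow_const (p := 2 * θ) (Or.inl hx)).const_mul δ).const_add 1
  exact h

lemma S5hasH' (hx : x ≠ 0) : HasDerivAt (fun y => S5H' δ θ y) (S5H'' δ θ x) x := by
  have h := (((Real.hasDerivAt_rpow_const (p := 2 * θ - 1) (Or.inl hx)).const_mul
    (2 * θ)).const_mul δ)
  exact h

lemma S5hasG (hδ : 0 < δ) (hx : 0 < x) :
    HasDerivAt (fun y => S5G δ θ μ κ y) (S5G' δ θ μ κ x) x := by
  have h := (S5hasP (μ := μ) (κ := κ) (x := x)).div (S5hasH (δ := δ) (θ := θ) hx.ne')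
    (S5H_pos (θ := θ) hδ hx).ne'
  exact h

lemma S5hasSqrtG (hδ : 0 < δ) (hμ : 0 ≤ μ) (hκ : 0 < κ) (hx : 0 < x) :
    HasDerivAt (fun y => Real.sqrt (S5G δ θ μ κ y)) (S5F1 δ θ μ κ x) x :=
  (S5hasG hδ hx).sqrt (S5G_pos hδ hμ hκ hx).ne'

lemma S5hasN (hx : x ≠ 0) :
    HasDerivAt (fun y => S5N δ θ μ κ y) (S5N' δ θ μ κ x) x := by
  have h := ((S5hasP' (μ := μ) (κ := κ) (x := x)).mul (S5hasH (δ := δ) (θ := θ) hx)).sub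
    ((S5hasP (μ := μ) (κ := κ) (x := x)).mul (S5hasH' (δ := δ) (θ := θ) hx))
  exact h

lemma S5hasG' (hδ : 0 < δ) (hx : 0 < x) :
    HasDerivAt (fun y => S5G' δ θ μ κ y) (S5G'' δ θ μ κ x) x := by
  have hH2 := (S5hasH (δ := δ) (θ := θ) hx.ne').pow 2
  have h := (S5hasN (δ := δ) (θ := θ) (μ := μ) (κ := κ) hx.ne').div hH2
    (pow_ne_zero 2 (S5H_pos (θ := θ) hδ hx).ne')
  refine h.congr_deriv ?_
  unfold S5G''; push_cast; simp only [Pi.pow_apply]; ring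

lemma S5hasF1 (hδ : 0 < δ) (hμ : 0 ≤ μ) (hκ : 0 < κ) (hx : 0 < x) :
    HasDerivAt (fun y => S5F1 δ θ μ κ y) (S5F2 δ θ μ κ x) x := by
  have hs : (0:ℝ) < Real.sqrt (S5G δ θ μ κ x) := Real.sqrt_pos.mpr (S5G_pos hδ hμ hκ hx)
  have hden := (S5hasSqrtG (θ := θ) hδ hμ hκ hx).const_mul (2:ℝ)
  have h := (S5hasG' (θ := θ) (μ := μ) (κ := κ) hδ hx).div hden (by positivity)
  exact h

end S5aux


section MainThm

set_option maxHeartbeats 1000000 in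
theorem stmt5 (δ θ μ κ : ℝ) (hδ : 0 < δ) (hθ : 0 < θ) (hθ2 : θ ≤ 2)
    (hμ : 0 ≤ μ) (hκ : 0 < κ)
    (f : ℝ → ℝ)
    (hf : ∀ r : ℝ, f r = Real.sqrt ((μ * r ^ 4 + κ * r ^ 2) / (1 + δ * r ^ (2 * θ))))
    (ε₀ : ℝ) (hε₀ : ε₀ = min ((κ / (2 * (μ + κ) * δ * θ)) ^ (1 / (2 * θ))) 1) :
    ∃ C : ℝ, 0 < C ∧ ∀ r : ℝ, 0 < r → r ≤ ε₀ →
      |deriv (deriv f) r| ≤ C * (1 + 1 / r) := by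
  have hfun : f = fun y => Real.sqrt (S5G δ θ μ κ y) := by
    funext y; rw [hf y]; rfl
  obtain ⟨c, hcdef⟩ : ∃ x : ℝ, x = Real.sqrt (κ / (1 + δ)) := ⟨_, rfl⟩
  obtain ⟨B, hBdef⟩ : ∃ x : ℝ, x = (4*μ+2*κ)*(1+δ) + 2*(δ*θ)*(μ+κ) := ⟨_, rfl⟩
  obtain ⟨D1, hD1def⟩ : ∃ x : ℝ, x = (12*μ+2*κ)*(1+δ) + 6*(δ*θ)*(μ+κ) := ⟨_, rfl⟩
  obtain ⟨D, hDdef⟩ : ∃ x : ℝ, x = D1 + 4*(δ*θ)*B := ⟨_, rfl⟩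
  have hμκ : (0:ℝ) ≤ μ + κ := by linarith
  have hδθ : (0:ℝ) ≤ δ * θ := mul_nonneg hδ.le hθ.le
  have hc : 0 < c := by
    rw [hcdef]; exact Real.sqrt_pos.mpr (div_pos hκ (by linarith))
  have hB : 0 < B := by
    rw [hBdef]
    linarith [mul_nonneg hδθ hμκ, mul_nonneg hμ hδ.le, mul_pos hκ hδ]
  have hD1 : 0 ≤ D1 := by
    rw [hD1def]
    linarith [mul_nonneg hδθ hμκ, mul_nonneg hμ hδ.le, mul_pos hκ hδ]
  have hD : 0 ≤ D := by
    rw [hDdef]; linarith [mul_nonneg hδθ hB.le]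
  refine ⟨D/(2*c) + B^2/(4*c^3) + 1, ?_, ?_⟩
  · have h1 : 0 ≤ D/(2*c) := div_nonneg hD (by linarith)
    have h2 : 0 ≤ B^2/(4*c^3) :=
      div_nonneg (sq_nonneg B) (by linarith [pow_pos hc 3])
    linarith
  intro r hr hrε
  have hr1 : r ≤ 1 := le_trans hrε (by rw [hε₀]; exact min_le_right _ _)
  have hev : deriv f =ᶠ[nhds r] fun y => S5F1 δ θ μ κ y := by
    filter_upwards [isOpen_Ioi.mem_nhds (show r ∈ Set.Ioi 0 from hr)] with y hy
    rw [hfun]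
    exact (S5hasSqrtG hδ hμ hκ hy).deriv
  have key : deriv (deriv f) r = S5F2 δ θ μ κ r := by
    rw [hev.deriv_eq]
    exact (S5hasF1 hδ hμ hκ hr).deriv
  rw [key]
  clear key hev hfun hf hε₀ hrε
  -- basic rpow facts
  have hv1 : r ^ (2*θ) ≤ 1 := Real.rpow_le_one hr.le hr1 (by linarith)
  have hvpos : 0 < r ^ (2*θ) := Real.rpow_pos_of_pos hr _
  have htpos : 0 < r ^ (2*θ-1) := Real.rpow_pos_of_pos hr _
  have hupos : 0 < r ^ (2*θ-1-1) := Real.rpow_pos_of_pos hr _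
  have hrt : r ^ (2*θ) = r * r ^ (2*θ-1) := by
    nth_rewrite 1 [show (2*θ:ℝ) = 1 + (2*θ-1) by ring]
    rw [Real.rpow_add hr, Real.rpow_one]
  have hru : r ^ (2*θ) = r^2 * r^(2*θ-1-1) := by
    nth_rewrite 1 [show (2*θ:ℝ) = ((2:ℕ):ℝ) + (2*θ-1-1) by push_cast; ring]
    rw [Real.rpow_add hr, Real.rpow_natCast]
  -- pointwise bounds
  have hH1 : 1 ≤ S5H δ θ r := by
    unfold S5H; linarith [mul_nonneg hδ.le hvpos.le]
  have hHle : S5H δ θ r ≤ 1 + δ := by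
    unfold S5H; linarith [mul_le_mul_of_nonneg_left hv1 hδ.le]
  have hHpos : (0:ℝ) < S5H δ θ r := lt_of_lt_of_le one_pos hH1
  have hr2 : r^2 ≤ 1 := by
    rw [sq]
    linarith [mul_le_mul hr1 hr1 hr.le zero_le_one]
  have hr4 : r^4 ≤ r^2 := pow_le_pow_of_le_one hr.le hr1 (by norm_num)
  have hr3 : r^3 ≤ r := by
    have := pow_le_pow_of_le_one hr.le hr1 (show 1 ≤ 3 by norm_num)
    simpa using this
  have hPle : S5P μ κ r ≤ (μ+κ)*r^2 := by
    unfold S5P; linarith [mul_le_mul_of_nonneg_left hr4 hμ]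
  have hPpos : 0 < S5P μ κ r := S5P_pos hμ hκ hr
  have hP'le : S5P' μ κ r ≤ (4*μ+2*κ)*r := by
    unfold S5P'; linarith [mul_le_mul_of_nonneg_left hr3 hμ]
  have hP'0 : 0 ≤ S5P' μ κ r := by
    unfold S5P'
    linarith [mul_nonneg hμ (pow_pos hr 3).le, mul_nonneg hκ.le hr.le]
  have hH'0 : 0 ≤ S5H' δ θ r := by
    unfold S5H'
    exact mul_nonneg hδ.le (mul_nonneg (by linarith) htpos.le)
  have hrH' : r * S5H' δ θ r ≤ 2*(δ*θ) := by
    unfold S5H'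
    have e : r * (δ*(2*θ*r^(2*θ-1))) = 2*(δ*θ)*(r * r^(2*θ-1)) := by ring
    rw [e, ← hrt]
    linarith [mul_le_mul_of_nonneg_left hv1 (show (0:ℝ) ≤ 2*(δ*θ) by linarith)]
  have hP''le : S5P'' μ κ r ≤ 12*μ+2*κ := by
    unfold S5P''; linarith [mul_le_mul_of_nonneg_left hr2 hμ]
  have hP''0 : 0 ≤ S5P'' μ κ r := by
    unfold S5P''; linarith [mul_nonneg hμ (sq_nonneg r)]
  have habs3 : |2*θ-1| ≤ 3 := abs_le.mpr ⟨by linarith, by linarith⟩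
  have hH''abs : |S5H'' δ θ r| ≤ δ*(2*θ)*3 * r^(2*θ-1-1) := by
    unfold S5H''
    have hnn : 0 ≤ δ*(2*θ) * r^(2*θ-1-1) := by
      have h := mul_nonneg hδθ hupos.le
      linarith
    have hm3 : (-3:ℝ) ≤ 2*θ-1 := by linarith [(abs_le.mp habs3).1]
    have h3 : 2*θ-1 ≤ 3 := (abs_le.mp habs3).2
    have hub := mul_le_mul_of_nonneg_left h3 hnn
    have hlb := mul_le_mul_of_nonneg_left hm3 hnn
    rw [abs_le]
    constructor
    · linarith [hlb]
    · linarith [hub]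
  have hH''b : r^2 * |S5H'' δ θ r| ≤ 6*(δ*θ) := by
    have step := mul_le_mul_of_nonneg_left hH''abs (sq_nonneg r)
    calc r^2 * |S5H'' δ θ r| ≤ r^2 * (δ*(2*θ)*3 * r^(2*θ-1-1)) := step
      _ = (6*(δ*θ)) * (r^2 * r^(2*θ-1-1)) := by ring
      _ = (6*(δ*θ)) * r^(2*θ) := by rw [← hru]
      _ ≤ (6*(δ*θ)) * 1 := mul_le_mul_of_nonneg_left hv1 (by linarith)
      _ = 6*(δ*θ) := mul_one _
  -- bound on N
  have hNabs : |S5N δ θ μ κ r| ≤ B*r := by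
    have h1 : S5P' μ κ r * S5H δ θ r ≤ ((4*μ+2*κ)*r)*(1+δ) :=
      mul_le_mul hP'le hHle (by linarith)
        (mul_nonneg (by linarith : (0:ℝ) ≤ 4*μ+2*κ) hr.le)
    have h2 : S5P μ κ r * S5H' δ θ r ≤ (μ+κ)*r*(2*(δ*θ)) := by
      calc S5P μ κ r * S5H' δ θ r ≤ ((μ+κ)*r^2) * S5H' δ θ r :=
            mul_le_mul_of_nonneg_right hPle hH'0
        _ = ((μ+κ)*r) * (r * S5H' δ θ r) := by ring
        _ ≤ ((μ+κ)*r) * (2*(δ*θ)) :=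
            mul_le_mul_of_nonneg_left hrH' (mul_nonneg hμκ hr.le)
        _ = (μ+κ)*r*(2*(δ*θ)) := by ring
    have h1' : 0 ≤ S5P' μ κ r * S5H δ θ r := mul_nonneg hP'0 hHpos.le
    have h2' : 0 ≤ S5P μ κ r * S5H' δ θ r := mul_nonneg hPpos.le hH'0
    rw [show S5N δ θ μ κ r = S5P' μ κ r * S5H δ θ r - S5P μ κ r * S5H' δ θ r from rfl,
      hBdef, abs_le]
    constructor
    · linarith [mul_nonneg (mul_nonneg hδθ hμκ) hr.le]
    · linarith [mul_nonneg (mul_nonneg hδθ hμκ) hr.le]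
  -- bound on N'
  have hN'abs : |S5N' δ θ μ κ r| ≤ D1 := by
    have hNe : S5N' δ θ μ κ r = S5P'' μ κ r * S5H δ θ r - S5P μ κ r * S5H'' δ θ r := by
      unfold S5N'; ring
    have ha : S5P μ κ r * S5H'' δ θ r ≤ S5P μ κ r * |S5H'' δ θ r| :=
      mul_le_mul_of_nonneg_left (le_abs_self _) hPpos.le
    have hb : -(S5P μ κ r * |S5H'' δ θ r|) ≤ S5P μ κ r * S5H'' δ θ r := by
      have h := mul_le_mul_of_nonneg_left (neg_abs_le (S5H'' δ θ r)) hPpos.le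
      linarith
    have hcc : S5P μ κ r * |S5H'' δ θ r| ≤ (μ+κ) * (6*(δ*θ)) := by
      calc S5P μ κ r * |S5H'' δ θ r| ≤ ((μ+κ)*r^2) * |S5H'' δ θ r| :=
            mul_le_mul_of_nonneg_right hPle (abs_nonneg _)
        _ = (μ+κ) * (r^2 * |S5H'' δ θ r|) := by ring
        _ ≤ (μ+κ) * (6*(δ*θ)) := mul_le_mul_of_nonneg_left hH''b hμκ
    have hd : S5P'' μ κ r * S5H δ θ r ≤ ((12*μ+2*κ))*(1+δ) :=
      mul_le_mul hP''le hHle (by linarith) (by linarith)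
    have hd' : 0 ≤ S5P'' μ κ r * S5H δ θ r := mul_nonneg hP''0 hHpos.le
    rw [hNe, hD1def, abs_le]
    constructor
    · linarith
    · linarith
  -- bound on G'
  have hH2 : 1 ≤ S5H δ θ r ^ 2 := by
    linarith [mul_le_mul_of_nonneg_left hH1 hHpos.le, hH1]
  have hG'abs : |S5G' δ θ μ κ r| ≤ B*r := by
    rw [show S5G' δ θ μ κ r = S5N δ θ μ κ r / S5H δ θ r ^ 2 from rfl, abs_div,
      abs_of_nonneg (by positivity : (0:ℝ) ≤ S5H δ θ r ^ 2)]
    calc |S5N δ θ μ κ r| / S5H δ θ r ^ 2 ≤ |S5N δ θ μ κ r| :=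
          div_le_self (abs_nonneg _) hH2
      _ ≤ B*r := hNabs
  -- bound on G''
  have hH4 : S5H δ θ r ^ 2 ≤ (S5H δ θ r ^ 2) ^ 2 := by
    linarith [mul_le_mul_of_nonneg_left hH2 (sq_nonneg (S5H δ θ r))]
  have hHH4 : S5H δ θ r ≤ (S5H δ θ r ^ 2) ^ 2 := by
    linarith [mul_le_mul_of_nonneg_left hH1 hHpos.le, hH4]
  have h2SH : (0:ℝ) ≤ 2 * S5H δ θ r * S5H' δ θ r := by
    linarith [mul_nonneg hHpos.le hH'0]
  have hG''abs : |S5G'' δ θ μ κ r| ≤ D := by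
    have t1 : |S5N' δ θ μ κ r * S5H δ θ r ^ 2| ≤ D1 * (S5H δ θ r ^ 2) ^ 2 := by
      rw [abs_mul, abs_of_nonneg (by positivity : (0:ℝ) ≤ S5H δ θ r ^ 2)]
      calc |S5N' δ θ μ κ r| * S5H δ θ r ^ 2 ≤ D1 * S5H δ θ r ^ 2 :=
            mul_le_mul_of_nonneg_right hN'abs (by positivity)
        _ ≤ D1 * (S5H δ θ r ^ 2) ^ 2 := mul_le_mul_of_nonneg_left hH4 hD1
    have t2 : |S5N δ θ μ κ r * (2 * S5H δ θ r * S5H' δ θ r)|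
        ≤ (4*(δ*θ)*B) * (S5H δ θ r ^ 2) ^ 2 := by
      rw [abs_mul, abs_of_nonneg h2SH]
      have s1 : |S5N δ θ μ κ r| * (2 * S5H δ θ r * S5H' δ θ r)
          ≤ (B*r) * (2 * S5H δ θ r * S5H' δ θ r) :=
        mul_le_mul_of_nonneg_right hNabs h2SH
      have s2 : (B*r) * (2 * S5H δ θ r * S5H' δ θ r)
          = (2*B*S5H δ θ r) * (r * S5H' δ θ r) := by ring
      have s3 : (2*B*S5H δ θ r) * (r * S5H' δ θ r) ≤ (2*B*S5H δ θ r) * (2*(δ*θ)) :=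
        mul_le_mul_of_nonneg_left hrH' (by linarith [mul_nonneg hB.le hHpos.le])
      have s4 : (2*B*S5H δ θ r) * (2*(δ*θ)) = (4*(δ*θ)*B) * S5H δ θ r := by ring
      have s5 : (4*(δ*θ)*B) * S5H δ θ r ≤ (4*(δ*θ)*B) * (S5H δ θ r ^ 2) ^ 2 :=
        mul_le_mul_of_nonneg_left hHH4 (by linarith [mul_nonneg hδθ hB.le])
      linarith
    have tri := abs_sub (S5N' δ θ μ κ r * S5H δ θ r ^ 2)
      (S5N δ θ μ κ r * (2 * S5H δ θ r * S5H' δ θ r))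
    have hnum : |S5N' δ θ μ κ r * S5H δ θ r ^ 2
        - S5N δ θ μ κ r * (2 * S5H δ θ r * S5H' δ θ r)| ≤ D * (S5H δ θ r ^ 2) ^ 2 := by
      rw [hDdef]
      linarith
    rw [show S5G'' δ θ μ κ r = (S5N' δ θ μ κ r * S5H δ θ r ^ 2
      - S5N δ θ μ κ r * (2 * S5H δ θ r * S5H' δ θ r)) / (S5H δ θ r ^ 2) ^ 2 from rfl,
      abs_div, abs_of_nonneg (by positivity : (0:ℝ) ≤ (S5H δ θ r ^ 2) ^ 2),
      div_le_iff₀ (pow_pos (pow_pos hHpos 2) 2)]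
    exact hnum
  -- lower bound on sqrt G
  have hGpos : 0 < S5G δ θ μ κ r := S5G_pos hδ hμ hκ hr
  have hGlow : (κ/(1+δ))*r^2 ≤ S5G δ θ μ κ r := by
    rw [show S5G δ θ μ κ r = S5P μ κ r / S5H δ θ r from rfl, le_div_iff₀ hHpos]
    have e : κ/(1+δ)*(1+δ) = κ := div_mul_cancel₀ _ (by linarith)
    have he2 : κ/(1+δ)*(1+δ)*r^2 = κ*r^2 := by rw [e]
    have hmono : (κ/(1+δ)*r^2)*(S5H δ θ r) ≤ (κ/(1+δ)*r^2)*(1+δ) :=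
      mul_le_mul_of_nonneg_left hHle
        (mul_nonneg (div_nonneg hκ.le (by linarith)) (sq_nonneg r))
    have hμr4 : 0 ≤ μ * r^4 := mul_nonneg hμ (by positivity)
    unfold S5P
    linarith
  obtain ⟨s, hsdef⟩ : ∃ x : ℝ, x = Real.sqrt (S5G δ θ μ κ r) := ⟨_, rfl⟩
  have hspos : 0 < s := by rw [hsdef]; exact Real.sqrt_pos.mpr hGpos
  have hs_low : c * r ≤ s := by
    have h := Real.sqrt_le_sqrt hGlow
    rw [Real.sqrt_mul (div_nonneg hκ.le (by linarith)) (r^2), Real.sqrt_sq hr.le] at h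
    rw [hsdef, hcdef]
    exact h
  -- final computation
  have hF2eq : S5F2 δ θ μ κ r = S5G'' δ θ μ κ r/(2*s) - (S5G' δ θ μ κ r)^2/(4*s^3) := by
    have hne : Real.sqrt (S5G δ θ μ κ r) ≠ 0 := by
      rw [← hsdef]; exact hspos.ne'
    rw [hsdef]
    rw [show S5F2 δ θ μ κ r = (S5G'' δ θ μ κ r * (2 * Real.sqrt (S5G δ θ μ κ r))
      - S5G' δ θ μ κ r * (2 * (S5G' δ θ μ κ r / (2 * Real.sqrt (S5G δ θ μ κ r)))))
      / (2 * Real.sqrt (S5G δ θ μ κ r)) ^ 2 from rfl]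
    field_simp
    ring
  have habs : |S5F2 δ θ μ κ r| ≤ |S5G'' δ θ μ κ r|/(2*s) + (S5G' δ θ μ κ r)^2/(4*s^3) := by
    rw [hF2eq]
    have tri := abs_sub (S5G'' δ θ μ κ r/(2*s)) ((S5G' δ θ μ κ r)^2/(4*s^3))
    rw [abs_div, abs_div, abs_of_nonneg (by linarith : (0:ℝ) ≤ 2*s),
      abs_of_nonneg (by linarith [pow_pos hspos 3] : (0:ℝ) ≤ 4*s^3),
      abs_of_nonneg (sq_nonneg (S5G' δ θ μ κ r))] at tri
    exact tri
  have ht1 : |S5G'' δ θ μ κ r|/(2*s) ≤ (D/(2*c))*(1/r) := by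
    have h : |S5G'' δ θ μ κ r|/(2*s) ≤ D/(2*(c*r)) :=
      div_le_div₀ hD hG''abs (by linarith [mul_pos hc hr]) (by linarith [hs_low])
    calc |S5G'' δ θ μ κ r|/(2*s) ≤ D/(2*(c*r)) := h
      _ = (D/(2*c))*(1/r) := by
          rw [mul_one_div, div_div, mul_assoc]
  have ht2 : (S5G' δ θ μ κ r)^2/(4*s^3) ≤ (B^2/(4*c^3))*(1/r) := by
    have hsq : (S5G' δ θ μ κ r)^2 ≤ (B*r)^2 :=
      sq_le_sq' (by linarith [(abs_le.mp hG'abs).1]) (abs_le.mp hG'abs).2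
    have hcube : (c*r)^3 ≤ s^3 := pow_le_pow_left₀ (mul_nonneg hc.le hr.le) hs_low 3
    have h : (S5G' δ θ μ κ r)^2/(4*s^3) ≤ (B*r)^2/(4*(c*r)^3) :=
      div_le_div₀ (by positivity) hsq
        (by linarith [pow_pos (mul_pos hc hr) 3]) (by linarith [hcube])
    calc (S5G' δ θ μ κ r)^2/(4*s^3) ≤ (B*r)^2/(4*(c*r)^3) := h
      _ = (B^2/(4*c^3))*(1/r) := by
          field_simp
  have h1r : 0 < 1/r := one_div_pos.mpr hr
  have hC0 : 0 ≤ D/(2*c) + B^2/(4*c^3) := by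
    have h1 : 0 ≤ D/(2*c) := div_nonneg hD (by linarith)
    have h2 : 0 ≤ B^2/(4*c^3) :=
      div_nonneg (sq_nonneg B) (by linarith [pow_pos hc 3])
    linarith
  have hfin : |S5F2 δ θ μ κ r| ≤ (D/(2*c) + B^2/(4*c^3))*(1/r) := by
    have e : (D/(2*c) + B^2/(4*c^3))*(1/r)
        = (D/(2*c))*(1/r) + (B^2/(4*c^3))*(1/r) := by ring
    rw [e]
    linarith
  have hgoal : (D/(2*c) + B^2/(4*c^3))*(1/r)
      ≤ (D/(2*c) + B^2/(4*c^3) + 1) * (1 + 1/r) := by linarith [hC0, h1r, mul_nonneg hC0 h1r.le]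
  linarith

end MainThm
end

section
/- Let n = 1, and assume u₀ ∈ L²(ℝ), u₁ ∈ L^{1,γ}(ℝ) with γ ∈ (1/2,1] and P = ∫_ℝ u₁(x)dx ≠ 0. Then the solution u of u_tt + δ(−Δ)^θ u_tt + μΔ²u − κΔu = 0 with data (u₀, u₁) satisfies ‖u(t,·)‖²_{L²(ℝ)} ≥ C P² t for t sufficiently large, for some constant C > 0. -/
set_option maxHeartbeats 1600000

open MeasureTheory

lemma aux_exp_bound {γ : ℝ} (hγ0 : 0 < γ) (hγ1 : γ ≤ 1) (y : ℝ) :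
    ‖Complex.exp (Complex.I * y) - 1‖ ≤ 2 * |y| ^ γ := by
  have habsIy : ‖Complex.I * y‖ = |y| := by
    rw [norm_mul, Complex.norm_I, Complex.norm_real, Real.norm_eq_abs, one_mul]
  rcases le_or_gt |y| 1 with h1 | h1
  · have h2 := Complex.norm_exp_sub_one_le (x := Complex.I * y) (by rw [habsIy]; exact h1)
    rw [habsIy] at h2
    refine h2.trans ?_
    have : |y| ≤ |y| ^ γ := by
      rcases eq_or_lt_of_le (abs_nonneg y) with h0 | h0
      · rw [← h0, Real.zero_rpow hγ0.ne']
      · calc |y| = |y| ^ (1:ℝ) := (Real.rpow_one _).symm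
          _ ≤ |y| ^ γ := Real.rpow_le_rpow_of_exponent_ge h0 h1 hγ1
    linarith
  · have h2 : ‖Complex.exp (Complex.I * y) - 1‖ ≤ 2 := by
      have he : ‖Complex.exp (Complex.I * y)‖ = 1 := by
        rw [mul_comm]; exact Complex.norm_exp_ofReal_mul_I y
      calc ‖Complex.exp (Complex.I * y) - 1‖
          ≤ ‖Complex.exp (Complex.I * y)‖ + ‖(1:ℂ)‖ :=
            norm_sub_le _ _
        _ = 2 := by rw [he, norm_one]; norm_num
    refine h2.trans ?_
    have : (1:ℝ) ≤ |y| ^ γ := Real.one_le_rpow h1.le hγ0.le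
    linarith

theorem stmt10 (δ θ μ κ γ : ℝ) (hδ : 0 < δ) (hθ : 0 < θ) (hθ2 : θ ≤ 2)
    (hμ : 0 ≤ μ) (hκ : 0 < κ) (hγ : 1 / 2 < γ) (hγ1 : γ ≤ 1)
    (u₀ u₁ : ℝ → ℝ) (hu₀ : MemLp u₀ 2 volume)
    (hu₁ : Integrable (fun x => (1 + |x| ^ γ) * |u₁ x|))
    (P : ℝ) (hP : P = ∫ x, u₁ x) (hP0 : P ≠ 0)
    (f : ℝ → ℝ)
    (hf : ∀ r : ℝ, f r = Real.sqrt ((μ * r ^ 4 + κ * r ^ 2) / (1 + δ * r ^ (2 * θ))))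
    (w : ℝ → ℝ → ℂ)
    (hw : ∀ t ξ : ℝ, w t ξ =
        (Real.cos (t * f |ξ|) : ℂ) * (∫ x : ℝ, Complex.exp (-(Complex.I * x * ξ)) * (u₀ x : ℂ))
      + ((Real.sin (t * f |ξ|) / f |ξ| : ℝ) : ℂ)
          * (∫ x : ℝ, Complex.exp (-(Complex.I * x * ξ)) * (u₁ x : ℂ))) :
    ∃ C : ℝ, 0 < C ∧ ∃ T : ℝ, ∀ t ≥ T,
      ENNReal.ofReal (C * P ^ 2 * t)
        ≤ ∫⁻ ξ : ℝ, ENNReal.ofReal (‖w t ξ‖ ^ 2) := by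
  classical
  have hγ0 : 0 < γ := lt_trans (by norm_num) hγ
  by_cases hInt : Integrable u₁ volume
  swap
  · exact absurd (hP.trans (integral_undef hInt)) hP0
  -- basic facts about the oscillating factor
  have hexp_norm : ∀ ξ x : ℝ, ‖Complex.exp (-(Complex.I * x * ξ))‖ = 1 := by
    intro ξ x; rw [Complex.norm_exp]; simp
  have hexp_aesm : ∀ ξ : ℝ,
      AEStronglyMeasurable (fun x : ℝ => Complex.exp (-(Complex.I * x * ξ))) volume :=
    fun ξ => (Complex.continuous_exp.comp
      (((continuous_const.mul Complex.continuous_ofReal).mul continuous_const).neg)).aestronglyMeasurable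
  have hIntC : Integrable (fun x : ℝ => ((u₁ x : ℝ) : ℂ)) volume := hInt.ofReal
  have hI1 : ∀ ξ : ℝ, Integrable (fun x : ℝ => Complex.exp (-(Complex.I * x * ξ)) * (u₁ x : ℂ)) :=
    fun ξ => hIntC.bdd_mul (c := 1) (hexp_aesm ξ) (ae_of_all _ fun x => (hexp_norm ξ x).le)
  -- constant C₁
  set C₁ : ℝ := ∫ x, (1 + |x| ^ γ) * |u₁ x| with hC₁def
  have hC₁ : 0 ≤ C₁ :=
    integral_nonneg (fun x => mul_nonneg (by positivity) (abs_nonneg _))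
  -- Fourier transform of u₁ close to P near 0
  have hF1 : ∀ ξ : ℝ, 0 ≤ ξ →
      ‖(∫ x : ℝ, Complex.exp (-(Complex.I * x * ξ)) * (u₁ x : ℂ)) - (P : ℂ)‖
        ≤ 2 * ξ ^ γ * C₁ := by
    intro ξ hξ
    have hPint : (P : ℂ) = ∫ x : ℝ, ((u₁ x : ℝ) : ℂ) := by
      rw [hP]; exact integral_ofReal.symm
    have heq : (∫ x : ℝ, Complex.exp (-(Complex.I * x * ξ)) * (u₁ x : ℂ)) - (P : ℂ)
        = ∫ x : ℝ, (Complex.exp (-(Complex.I * x * ξ)) * (u₁ x : ℂ) - (u₁ x : ℂ)) := by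
      rw [integral_sub (hI1 ξ) hIntC, hPint]
    rw [heq]
    have hb : ∀ x : ℝ, ‖Complex.exp (-(Complex.I * x * ξ)) * (u₁ x : ℂ) - (u₁ x : ℂ)‖
        ≤ 2 * ξ ^ γ * ((1 + |x| ^ γ) * |u₁ x|) := by
      intro x
      have heq : Complex.exp (-(Complex.I * x * ξ)) * (u₁ x : ℂ) - (u₁ x : ℂ)
          = (Complex.exp (Complex.I * ((-(x * ξ) : ℝ) : ℂ)) - 1) * (u₁ x : ℂ) := by
        have : (-(Complex.I * x * ξ)) = Complex.I * ((-(x * ξ) : ℝ) : ℂ) := by push_cast; ring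
        rw [← this]; ring
      rw [heq, norm_mul, Complex.norm_real, Real.norm_eq_abs]
      have h1 := aux_exp_bound hγ0 hγ1 (-(x * ξ))
      have h2 : |(-(x * ξ))| ^ γ = |x| ^ γ * ξ ^ γ := by
        rw [abs_neg, abs_mul, abs_of_nonneg hξ, Real.mul_rpow (abs_nonneg x) hξ]
      rw [h2] at h1
      have h3 : |x| ^ γ ≤ 1 + |x| ^ γ := by
        have : (0:ℝ) ≤ |x| ^ γ := Real.rpow_nonneg (abs_nonneg x) γ
        linarith
      have h4 : (0:ℝ) ≤ ξ ^ γ := Real.rpow_nonneg hξ γ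
      have h5 : (0:ℝ) ≤ |x| ^ γ := Real.rpow_nonneg (abs_nonneg x) γ
      nlinarith [abs_nonneg (u₁ x), h1, mul_le_mul_of_nonneg_right h3 (mul_nonneg h4 (abs_nonneg (u₁ x)))]
    calc ‖∫ x : ℝ, (Complex.exp (-(Complex.I * x * ξ)) * (u₁ x : ℂ) - (u₁ x : ℂ))‖
        ≤ ∫ x : ℝ, 2 * ξ ^ γ * ((1 + |x| ^ γ) * |u₁ x|) :=
          norm_integral_le_of_norm_le (hu₁.const_mul _) (ae_of_all _ hb)
      _ = 2 * ξ ^ γ * C₁ := by rw [integral_const_mul]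
  -- threshold ξ₁
  set ξ₁ : ℝ := min 1 ((|P| / (8 * (C₁ + 1))) ^ (γ⁻¹ : ℝ)) with hξ₁def
  have hξ₁pos : 0 < ξ₁ := lt_min one_pos (Real.rpow_pos_of_pos (by positivity) _)
  have hsmall : ∀ ξ : ℝ, 0 < ξ → ξ ≤ ξ₁ → 2 * ξ ^ γ * C₁ ≤ |P| / 2 := by
    intro ξ h0 hle
    have h1 : ξ ^ γ ≤ ((|P| / (8 * (C₁ + 1))) ^ (γ⁻¹ : ℝ)) ^ γ :=
      Real.rpow_le_rpow h0.le (hle.trans (min_le_right _ _)) hγ0.le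
    rw [Real.rpow_inv_rpow (by positivity) hγ0.ne'] at h1
    have hP2 : 0 < |P| := abs_pos.mpr hP0
    have h2 : 2 * ξ ^ γ * C₁ ≤ 2 * (|P| / (8 * (C₁ + 1))) * C₁ := by nlinarith
    refine h2.trans ?_
    have hd : (0:ℝ) < 8 * (C₁ + 1) := by positivity
    have hrw : 2 * (|P| / (8 * (C₁ + 1))) * C₁ = 2 * |P| * C₁ / (8 * (C₁ + 1)) := by ring
    rw [hrw, div_le_div_iff₀ hd (by norm_num : (0:ℝ) < 2)]
    nlinarith
  -- bound for the u₀ term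
  obtain ⟨M, hM0, hMbd⟩ : ∃ M : ℝ, 0 ≤ M ∧ ∀ ξ : ℝ,
      ‖∫ x : ℝ, Complex.exp (-(Complex.I * x * ξ)) * (u₀ x : ℂ)‖ ≤ M := by
    by_cases hi : Integrable (fun x : ℝ => (u₀ x : ℂ)) volume
    · refine ⟨∫ x, ‖(u₀ x : ℂ)‖, integral_nonneg (fun x => norm_nonneg _), fun ξ => ?_⟩
      exact norm_integral_le_of_norm_le hi.norm
        (ae_of_all _ fun x => by rw [norm_mul, hexp_norm ξ x, one_mul])
    · refine ⟨0, le_refl 0, fun ξ => ?_⟩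
      have hni : ¬ Integrable (fun x : ℝ => Complex.exp (-(Complex.I * x * ξ)) * (u₀ x : ℂ)) volume := by
        intro h
        apply hi
        have h2 := h.bdd_mul (c := 1) (f := fun x : ℝ => Complex.exp (Complex.I * x * ξ))
          ((Complex.continuous_exp.comp
            ((continuous_const.mul Complex.continuous_ofReal).mul continuous_const)).aestronglyMeasurable)
          (ae_of_all _ fun x => le_of_eq (by rw [Complex.norm_exp]; simp))
        have : (fun x : ℝ => Complex.exp (Complex.I * x * ξ) *
            (Complex.exp (-(Complex.I * x * ξ)) * (u₀ x : ℂ))) = fun x : ℝ => (u₀ x : ℂ) := by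
          funext x
          rw [← mul_assoc, ← Complex.exp_add]
          simp
        rwa [this] at h2
      rw [integral_undef hni]
      simp
  -- properties of f
  have hfpos : ∀ ξ : ℝ, 0 < ξ → 0 < f ξ := by
    intro ξ h
    rw [hf]
    apply Real.sqrt_pos.mpr
    apply div_pos
    · nlinarith [pow_pos h 4, pow_pos h 2]
    · have := Real.rpow_pos_of_pos h (2 * θ); nlinarith
  set K : ℝ := Real.sqrt (μ + κ) with hKdef
  have hK0 : 0 ≤ K := Real.sqrt_nonneg _
  have hfle : ∀ ξ : ℝ, 0 < ξ → ξ ≤ 1 → f ξ ≤ K * ξ := by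
    intro ξ h0 h1
    rw [hf]
    have hrp := Real.rpow_pos_of_pos h0 (2 * θ)
    have hnum : 0 ≤ μ * ξ ^ 4 + κ * ξ ^ 2 := by positivity
    calc Real.sqrt ((μ * ξ ^ 4 + κ * ξ ^ 2) / (1 + δ * ξ ^ (2 * θ)))
        ≤ Real.sqrt ((μ + κ) * ξ ^ 2) := by
          apply Real.sqrt_le_sqrt
          have hξ2 : ξ ^ 2 ≤ 1 := by nlinarith
          have hd : μ * ξ ^ 4 + κ * ξ ^ 2 ≤ (μ + κ) * ξ ^ 2 := by
            nlinarith [mul_le_mul_of_nonneg_left hξ2 (mul_nonneg hμ (sq_nonneg ξ))]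
          refine le_trans (div_le_self hnum (by nlinarith)) hd
      _ = K * ξ := by
          rw [Real.sqrt_mul (by linarith) (ξ ^ 2), Real.sqrt_sq h0.le]
  -- choose ε
  set ε : ℝ := min (1/2) (1 / (4 * (K + 1))) with hεdef
  have hεpos : 0 < ε := lt_min (by norm_num) (by positivity)
  have hε1 : ε ≤ 1 / (4 * (K + 1)) := min_le_right _ _
  -- choose T
  have hPabs : 0 < |P| := abs_pos.mpr hP0
  refine ⟨9 * ε / 256, by positivity, 1 + 2 * ε + 2 * ε / ξ₁ + 16 * M / (3 * |P|), fun t ht => ?_⟩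
  have ht1 : (1:ℝ) ≤ t := by
    have h1 : 0 ≤ 2 * ε := by positivity
    have h2 : 0 ≤ 2 * ε / ξ₁ := by positivity
    have h3 : 0 ≤ 16 * M / (3 * |P|) := by positivity
    linarith
  have ht0 : 0 < t := lt_of_lt_of_le one_pos ht1
  have ht2ε : 2 * ε ≤ t := by
    have h2 : 0 ≤ 2 * ε / ξ₁ := by positivity
    have h3 : 0 ≤ 16 * M / (3 * |P|) := by positivity
    linarith
  have htξ₁ : 2 * ε / t ≤ ξ₁ := by
    rw [div_le_iff₀ ht0]
    have h4 : 2 * ε / ξ₁ ≤ t := by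
      have h3 : 0 ≤ 16 * M / (3 * |P|) := by positivity
      have : 0 ≤ 2 * ε := by positivity
      linarith
    calc 2 * ε = ξ₁ * (2 * ε / ξ₁) := by field_simp
      _ ≤ ξ₁ * t := by apply mul_le_mul_of_nonneg_left h4 hξ₁pos.le
  have htM : M ≤ 3 / 16 * t * |P| := by
    have h4 : 16 * M / (3 * |P|) ≤ t := by
      have : 0 ≤ 2 * ε := by positivity
      have h2 : 0 ≤ 2 * ε / ξ₁ := by positivity
      linarith
    rw [div_le_iff₀ (by positivity)] at h4
    nlinarith
  -- key pointwise bound on S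
  have key : ∀ ξ ∈ Set.Icc (ε / t) (2 * ε / t),
      ENNReal.ofReal ((3 / 16 * t * |P|) ^ 2) ≤ ENNReal.ofReal (‖w t ξ‖ ^ 2) := by
    intro ξ hξS
    obtain ⟨hlo, hhi⟩ := hξS
    have hξpos : 0 < ξ := lt_of_lt_of_le (by positivity) hlo
    have hξ1 : ξ ≤ 1 := by
      refine hhi.trans ?_
      rw [div_le_one ht0]; exact ht2ε
    have hξξ₁ : ξ ≤ ξ₁ := hhi.trans htξ₁
    have habsξ : |ξ| = ξ := abs_of_pos hξpos
    have hfp := hfpos ξ hξpos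
    have htf0 : 0 < t * f ξ := mul_pos ht0 hfp
    have htf1 : t * f ξ ≤ 1 := by
      have h1 : f ξ ≤ K * ξ := hfle ξ hξpos hξ1
      have h2 : t * f ξ ≤ t * (K * ξ) := by nlinarith
      have h3 : t * (K * ξ) ≤ t * (K * (2 * ε / t)) := by
        apply mul_le_mul_of_nonneg_left _ ht0.le
        exact mul_le_mul_of_nonneg_left hhi hK0
      have h4 : t * (K * (2 * ε / t)) = 2 * K * ε := by field_simp
      have h5 : 2 * K * ε ≤ 2 * K * (1 / (4 * (K + 1))) := by
        apply mul_le_mul_of_nonneg_left hε1 (by positivity)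
      have h6 : 2 * K * (1 / (4 * (K + 1))) ≤ 1 := by
        rw [mul_one_div, div_le_one (by positivity)]
        nlinarith
      linarith
    have hsin : 3 / 4 * (t * f ξ) ≤ Real.sin (t * f ξ) := by
      have h := Real.sin_gt_sub_cube htf0
      have hsq : (t * f ξ) ^ 2 ≤ 1 := by nlinarith
      nlinarith [mul_le_mul_of_nonneg_left hsq htf0.le]
    have hsdiv : 3 / 4 * t ≤ Real.sin (t * f ξ) / f ξ := by
      rw [le_div_iff₀ hfp]
      nlinarith
    -- lower bound for |û₁ ξ|
    have hu1lb : |P| / 2 ≤ ‖∫ x : ℝ, Complex.exp (-(Complex.I * x * ξ)) * (u₁ x : ℂ)‖ := by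
      have h1 := hF1 ξ hξpos.le
      have h2 := hsmall ξ hξpos hξξ₁
      set I₁ : ℂ := ∫ x : ℝ, Complex.exp (-(Complex.I * x * ξ)) * (u₁ x : ℂ) with hI₁def
      have h3 : ‖(P : ℂ)‖ ≤ ‖I₁‖ + ‖I₁ - (P : ℂ)‖ := by
        have h := norm_sub_le I₁ (I₁ - (P : ℂ))
        have h4 : I₁ - (I₁ - (P : ℂ)) = (P : ℂ) := by ring
        rwa [h4] at h
      rw [Complex.norm_real, Real.norm_eq_abs] at h3
      linarith
    -- now the main bound
    apply ENNReal.ofReal_le_ofReal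
    have hwlb : 3 / 16 * t * |P| ≤ ‖w t ξ‖ := by
      rw [hw, habsξ]
      set A := (Real.cos (t * f ξ) : ℂ) * (∫ x : ℝ, Complex.exp (-(Complex.I * x * ξ)) * (u₀ x : ℂ)) with hA
      set B := ((Real.sin (t * f ξ) / f ξ : ℝ) : ℂ) * (∫ x : ℝ, Complex.exp (-(Complex.I * x * ξ)) * (u₁ x : ℂ)) with hB
      have hBlb : 3 / 8 * t * |P| ≤ ‖B‖ := by
        rw [hB, norm_mul, Complex.norm_real, Real.norm_eq_abs]
        have h1 : 3 / 4 * t ≤ |Real.sin (t * f ξ) / f ξ| := le_trans hsdiv (le_abs_self _)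
        calc 3 / 8 * t * |P| = (3 / 4 * t) * (|P| / 2) := by ring
          _ ≤ _ := mul_le_mul h1 hu1lb (by positivity) (abs_nonneg _)
      have hAub : ‖A‖ ≤ M := by
        rw [hA, norm_mul, Complex.norm_real, Real.norm_eq_abs]
        have h5 := mul_le_mul (Real.abs_cos_le_one (t * f ξ)) (hMbd ξ)
          (norm_nonneg _) zero_le_one
        simpa using h5
      have htri : ‖B‖ - ‖A‖ ≤ ‖A + B‖ := by
        have h := norm_sub_le (A + B) A
        have h2 : A + B - A = B := by ring
        rw [h2] at h
        linarith
      linarith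
    have h0 : 0 ≤ 3 / 16 * t * |P| := by positivity
    exact pow_le_pow_left₀ h0 hwlb 2
  -- conclude by integrating over S
  calc ENNReal.ofReal (9 * ε / 256 * P ^ 2 * t)
      = ENNReal.ofReal ((3 / 16 * t * |P|) ^ 2) * volume (Set.Icc (ε / t) (2 * ε / t)) := by
        rw [Real.volume_Icc, ← ENNReal.ofReal_mul (by positivity)]
        congr 1
        have h1 : 2 * ε / t - ε / t = ε / t := by ring
        rw [h1, mul_pow, mul_pow, sq_abs]
        field_simp
        ring
    _ = ∫⁻ ξ : ℝ, (Set.Icc (ε / t) (2 * ε / t)).indicator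
          (fun _ => ENNReal.ofReal ((3 / 16 * t * |P|) ^ 2)) ξ :=
        (lintegral_indicator_const measurableSet_Icc _).symm
    _ ≤ ∫⁻ ξ : ℝ, ENNReal.ofReal (‖w t ξ‖ ^ 2) := by
        apply lintegral_mono
        intro ξ
        by_cases hmem : ξ ∈ Set.Icc (ε / t) (2 * ε / t)
        · rw [Set.indicator_of_mem hmem]
          exact key ξ hmem
        · rw [Set.indicator_of_notMem hmem]
          exact zero_le
end

section
/- Let δ > 0, θ ∈ (0,2], μ ≥ 0, κ > 0, ε₀ as above, and f(r) = sqrt((μr⁴+κr²)/(1+δr^{2θ})). Then there exists a constant C > 0 such that for all sufficiently large t, |∫_{1/t}^{ε₀} e^{−r²} cos(2tf(r)) (1+δr^{2θ})/(μr³+κr) dr| ≤ C. -/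
open MeasureTheory Real

namespace S13

noncomputable def Q (δ θ x : ℝ) : ℝ := 1 + δ * x ^ (2*θ)
noncomputable def Qd (δ θ x : ℝ) : ℝ := 2*δ*θ * x ^ (2*θ-1)
noncomputable def Qdd (δ θ x : ℝ) : ℝ := 2*δ*θ*(2*θ-1) * x ^ (2*θ-2)
def P (μ κ x : ℝ) : ℝ := μ*x^4 + κ*x^2
def Pd (μ κ x : ℝ) : ℝ := 4*μ*x^3 + 2*κ*x
def D (μ κ x : ℝ) : ℝ := μ*x^3 + κ*x
def Dd (μ κ x : ℝ) : ℝ := 3*μ*x^2 + κ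
noncomputable def F (δ θ μ κ x : ℝ) : ℝ := P μ κ x / Q δ θ x
noncomputable def N (δ θ μ κ x : ℝ) : ℝ := Pd μ κ x * Q δ θ x - P μ κ x * Qd δ θ x
noncomputable def Nd (δ θ μ κ x : ℝ) : ℝ := (12*μ*x^2 + 2*κ) * Q δ θ x - P μ κ x * Qdd δ θ x
noncomputable def Fd (δ θ μ κ x : ℝ) : ℝ := N δ θ μ κ x / (Q δ θ x)^2
noncomputable def Fdd (δ θ μ κ x : ℝ) : ℝ :=
  (Nd δ θ μ κ x * Q δ θ x - 2 * N δ θ μ κ x * Qd δ θ x) / (Q δ θ x)^3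
noncomputable def ff (δ θ μ κ x : ℝ) : ℝ := Real.sqrt (F δ θ μ κ x)
noncomputable def fd (δ θ μ κ x : ℝ) : ℝ := Fd δ θ μ κ x / (2 * ff δ θ μ κ x)
noncomputable def fdd (δ θ μ κ x : ℝ) : ℝ :=
  Fdd δ θ μ κ x / (2 * ff δ θ μ κ x) - (Fd δ θ μ κ x)^2 / (4 * F δ θ μ κ x * ff δ θ μ κ x)
noncomputable def g (δ θ μ κ x : ℝ) : ℝ := Real.exp (-x^2) * Q δ θ x / D μ κ x
noncomputable def gd (δ θ μ κ x : ℝ) : ℝ :=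
  Real.exp (-x^2) * ((Qd δ θ x - 2*x*Q δ θ x) * D μ κ x - Q δ θ x * Dd μ κ x) / (D μ κ x)^2

variable {δ θ μ κ : ℝ}

lemma Qpos (hδ : 0 < δ) {x : ℝ} (hx : 0 < x) : 0 < Q δ θ x := by
  have : 0 < x ^ (2*θ) := Real.rpow_pos_of_pos hx _
  unfold Q; nlinarith

lemma Ppos (hμ : 0 ≤ μ) (hκ : 0 < κ) {x : ℝ} (hx : 0 < x) : 0 < P μ κ x := by
  unfold P; nlinarith [pow_pos hx 2, pow_pos hx 4]

lemma Dpos (hμ : 0 ≤ μ) (hκ : 0 < κ) {x : ℝ} (hx : 0 < x) : 0 < D μ κ x := by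
  unfold D; nlinarith [pow_pos hx 3]

lemma Fpos (hδ : 0 < δ) (hμ : 0 ≤ μ) (hκ : 0 < κ) {x : ℝ} (hx : 0 < x) :
    0 < F δ θ μ κ x := div_pos (Ppos hμ hκ hx) (Qpos hδ hx)

lemma ffpos (hδ : 0 < δ) (hμ : 0 ≤ μ) (hκ : 0 < κ) {x : ℝ} (hx : 0 < x) :
    0 < ff δ θ μ κ x := Real.sqrt_pos.mpr (Fpos hδ hμ hκ hx)

lemma hasDerivAt_Q (hx : (0:ℝ) < x) : HasDerivAt (Q δ θ) (Qd δ θ x) x := by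
  have h := ((Real.hasDerivAt_rpow_const (p := 2*θ) (Or.inl hx.ne')).const_mul δ).const_add 1
  refine h.congr_deriv ?_
  unfold Qd; ring

lemma hasDerivAt_Qd (hx : (0:ℝ) < x) : HasDerivAt (Qd δ θ) (Qdd δ θ x) x := by
  have h := (Real.hasDerivAt_rpow_const (p := 2*θ-1) (Or.inl hx.ne')).const_mul (2*δ*θ)
  refine h.congr_deriv ?_
  unfold Qdd
  rw [show (2*θ-1-1 : ℝ) = 2*θ-2 by ring]
  ring

lemma hasDerivAt_P {x : ℝ} : HasDerivAt (P μ κ) (Pd μ κ x) x := by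
  have h := ((hasDerivAt_pow 4 x).const_mul μ).add ((hasDerivAt_pow 2 x).const_mul κ)
  refine h.congr_deriv ?_
  unfold Pd; push_cast; ring

lemma hasDerivAt_D {x : ℝ} : HasDerivAt (D μ κ) (Dd μ κ x) x := by
  have h := ((hasDerivAt_pow 3 x).const_mul μ).add ((hasDerivAt_id x).const_mul κ)
  refine h.congr_deriv ?_
  unfold Dd; push_cast; ring

lemma hasDerivAt_F (hδ : 0 < δ) {x : ℝ} (hx : 0 < x) :
    HasDerivAt (F δ θ μ κ) (Fd δ θ μ κ x) x := by
  have h := (hasDerivAt_P (μ := μ) (κ := κ) (x := x)).div (hasDerivAt_Q (δ := δ) (θ := θ) hx)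
    (Qpos (θ := θ) hδ hx).ne'
  exact h.congr_deriv rfl

lemma hasDerivAt_ff (hδ : 0 < δ) (hμ : 0 ≤ μ) (hκ : 0 < κ) {x : ℝ} (hx : 0 < x) :
    HasDerivAt (ff δ θ μ κ) (fd δ θ μ κ x) x :=
  (hasDerivAt_F hδ hx).sqrt (Fpos hδ hμ hκ hx).ne'

lemma hasDerivAt_N (hx : (0:ℝ) < x) : HasDerivAt (N δ θ μ κ) (Nd δ θ μ κ x) x := by
  have h1 : HasDerivAt (fun y => Pd μ κ y) (12*μ*x^2 + 2*κ) x := by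
    have h := ((hasDerivAt_pow 3 x).const_mul (4*μ)).add ((hasDerivAt_id x).const_mul (2*κ))
    refine h.congr_deriv ?_
    push_cast; ring
  have h := (h1.mul (hasDerivAt_Q (δ := δ) (θ := θ) hx)).sub
    ((hasDerivAt_P (μ := μ) (κ := κ)).mul (hasDerivAt_Qd (δ := δ) (θ := θ) hx))
  refine h.congr_deriv ?_
  unfold Nd; ring

lemma hasDerivAt_Fd (hδ : 0 < δ) {x : ℝ} (hx : 0 < x) :
    HasDerivAt (Fd δ θ μ κ) (Fdd δ θ μ κ x) x := by
  have hQx := Qpos (θ := θ) hδ hx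
  have hQsq : HasDerivAt (fun y => (Q δ θ y)^2) (2 * Q δ θ x * Qd δ θ x) x := by
    have h := (hasDerivAt_Q (δ := δ) (θ := θ) hx).pow 2
    refine h.congr_deriv ?_; push_cast; ring
  have h := (hasDerivAt_N (δ := δ) (θ := θ) (μ := μ) (κ := κ) hx).div hQsq (by positivity)
  refine h.congr_deriv ?_
  unfold Fdd
  field_simp

lemma hasDerivAt_fd (hδ : 0 < δ) (hμ : 0 ≤ μ) (hκ : 0 < κ) {x : ℝ} (hx : 0 < x) :
    HasDerivAt (fd δ θ μ κ) (fdd δ θ μ κ x) x := by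
  have hF := Fpos (θ := θ) hδ hμ hκ hx
  have hffx := ffpos (θ := θ) hδ hμ hκ hx
  have hsq : ff δ θ μ κ x ^ 2 = F δ θ μ κ x := Real.sq_sqrt hF.le
  have h2 : HasDerivAt (fun y => 2 * ff δ θ μ κ y) (2 * fd δ θ μ κ x) x :=
    (hasDerivAt_ff hδ hμ hκ hx).const_mul 2
  have h := (hasDerivAt_Fd (θ := θ) (μ := μ) (κ := κ) hδ hx).div h2 (by positivity)
  have hne := hffx.ne'
  refine h.congr_deriv ?_
  unfold fdd fd
  rw [show F δ θ μ κ x = ff δ θ μ κ x ^ 2 from hsq.symm]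
  field_simp
  ring

lemma hasDerivAt_g (hδ : 0 < δ) (hμ : 0 ≤ μ) (hκ : 0 < κ) {x : ℝ} (hx : 0 < x) :
    HasDerivAt (g δ θ μ κ) (gd δ θ μ κ x) x := by
  have hDx := Dpos hμ hκ hx
  have hexp : HasDerivAt (fun y : ℝ => Real.exp (-y^2)) (-(2*x) * Real.exp (-x^2)) x := by
    have h := ((hasDerivAt_pow 2 x).neg).exp
    refine h.congr_deriv ?_
    push_cast [Pi.neg_apply]; ring
  have h := ((hexp.mul (hasDerivAt_Q (δ := δ) (θ := θ) hx)).div (hasDerivAt_D (μ := μ) (κ := κ)) hDx.ne')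
  refine h.congr_deriv ?_
  unfold gd; simp only [Pi.mul_apply]; ring

noncomputable def s0 (δ κ : ℝ) : ℝ := Real.sqrt (κ/(1+δ))
noncomputable def sA (μ κ : ℝ) : ℝ := Real.sqrt (μ+κ)
noncomputable def cl (δ μ κ : ℝ) : ℝ := κ / (2*(1+δ)^2 * sA μ κ)
noncomputable def c2 (δ μ κ : ℝ) : ℝ := (4*μ+2*κ)*(1+δ) / (2 * s0 δ κ)
noncomputable def Cg (δ θ μ κ : ℝ) : ℝ :=
  (2*δ*θ*(μ+κ) + 2*(1+δ)*(μ+κ) + (1+δ)*(3*μ+κ)) / κ^2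
noncomputable def CF (δ θ μ κ : ℝ) : ℝ :=
  ((12*μ+2*κ)*(1+δ) + 6*(μ+κ)*δ*θ)*(1+δ) + 4*δ*θ*(4*μ+2*κ)*(1+δ)
noncomputable def C5 (δ θ μ κ : ℝ) : ℝ :=
  CF δ θ μ κ/(2*s0 δ κ) + (4*μ+2*κ)^2*(1+δ)^3/(4*κ*s0 δ κ)

section bounds

variable {δ θ μ κ ε₀ x : ℝ}

lemma s0_pos (hδ : 0 < δ) (hκ : 0 < κ) : 0 < s0 δ κ :=
  Real.sqrt_pos.mpr (by positivity)

lemma sA_pos (hμ : 0 ≤ μ) (hκ : 0 < κ) : 0 < sA μ κ :=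
  Real.sqrt_pos.mpr (by linarith)

lemma cl_pos (hδ : 0 < δ) (hμ : 0 ≤ μ) (hκ : 0 < κ) : 0 < cl δ μ κ := by
  have := sA_pos hμ hκ; unfold cl; positivity

lemma c2_pos (hδ : 0 < δ) (hμ : 0 ≤ μ) (hκ : 0 < κ) : 0 < c2 δ μ κ := by
  have := s0_pos hδ hκ; unfold c2; positivity

lemma Cg_pos (hδ : 0 < δ) (hθ : 0 < θ) (hμ : 0 ≤ μ) (hκ : 0 < κ) : 0 < Cg δ θ μ κ := by
  unfold Cg; positivity

lemma CF_pos (hδ : 0 < δ) (hθ : 0 < θ) (hμ : 0 ≤ μ) (hκ : 0 < κ) : 0 < CF δ θ μ κ := by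
  unfold CF; positivity

lemma C5_pos (hδ : 0 < δ) (hθ : 0 < θ) (hμ : 0 ≤ μ) (hκ : 0 < κ) : 0 < C5 δ θ μ κ := by
  have h1 := CF_pos hδ hθ hμ hκ; have h2 := s0_pos hδ hκ; unfold C5; positivity

-- basic rpow facts for 0 < x ≤ 1
lemma rp1 (hθ : 0 < θ) (hx : 0 < x) (hx1 : x ≤ 1) : x ^ (2*θ) ≤ 1 :=
  Real.rpow_le_one hx.le hx1 (by positivity)

lemma rp2 (hx : 0 < x) : x ^ (2*θ-1) * x = x ^ (2*θ) := by
  calc x ^ (2*θ-1) * x = x ^ (2*θ-1) * x ^ (1:ℝ) := by rw [Real.rpow_one]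
    _ = x ^ (2*θ-1+1) := (Real.rpow_add hx _ _).symm
    _ = x ^ (2*θ) := by norm_num

lemma rp3 (hx : 0 < x) : x ^ (2*θ-2) * x^2 = x ^ (2*θ) := by
  calc x ^ (2*θ-2) * x^2 = x ^ (2*θ-2) * x ^ ((2:ℕ):ℝ) := by rw [Real.rpow_natCast]
    _ = x ^ (2*θ-2+2) := by rw [← Real.rpow_add hx]; norm_num
    _ = x ^ (2*θ) := by norm_num

lemma Q_le (hδ : 0 < δ) (hθ : 0 < θ) (hx : 0 < x) (hx1 : x ≤ 1) : Q δ θ x ≤ 1 + δ := by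
  have := rp1 (θ := θ) hθ hx hx1
  unfold Q; nlinarith

lemma Q_ge (hδ : 0 < δ) (hx : 0 < x) : 1 ≤ Q δ θ x := by
  have : 0 < x ^ (2*θ) := Real.rpow_pos_of_pos hx _
  unfold Q; nlinarith

lemma Qd_pos (hδ : 0 < δ) (hθ : 0 < θ) (hx : 0 < x) : 0 < Qd δ θ x := by
  have : 0 < x ^ (2*θ-1) := Real.rpow_pos_of_pos hx _
  unfold Qd; positivity

lemma Qd_le (hδ : 0 < δ) (hθ : 0 < θ) (hx : 0 < x) (hx1 : x ≤ 1) :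
    Qd δ θ x ≤ 2*δ*θ/x := by
  rw [le_div_iff₀ hx]
  unfold Qd
  calc 2*δ*θ*x^(2*θ-1)*x = 2*δ*θ*(x^(2*θ-1)*x) := by ring
    _ = 2*δ*θ*x^(2*θ) := by rw [rp2 hx]
    _ ≤ 2*δ*θ*1 := by gcongr; exact rp1 hθ hx hx1
    _ = 2*δ*θ := by ring

lemma Qdd_abs (hδ : 0 < δ) (hθ : 0 < θ) (hθ2 : θ ≤ 2) (hx : 0 < x) (hx1 : x ≤ 1) :
    |Qdd δ θ x| ≤ 6*δ*θ/x^2 := by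
  have h3 := rp3 (θ := θ) hx
  have h1 := rp1 (θ := θ) hθ hx hx1
  have hxp : (0:ℝ) < x ^ (2*θ-2) := Real.rpow_pos_of_pos hx _
  have habs : |Qdd δ θ x| ≤ 2*δ*θ*3 * x ^ (2*θ-2) := by
    unfold Qdd
    rw [abs_mul, abs_of_pos hxp]
    have he : |2*δ*θ*(2*θ-1)| = 2*δ*θ*|2*θ-1| := by
      rw [abs_mul, abs_of_pos (by positivity)]
    rw [he]
    have h9 : |2*θ-1| ≤ 3 := by rw [abs_le]; constructor <;> nlinarith
    gcongr
  have hle : x ^ (2*θ-2) ≤ 1/x^2 := by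
    rw [le_div_iff₀ (by positivity)]
    rw [h3]; exact h1
  calc |Qdd δ θ x| ≤ 2*δ*θ*3 * x ^ (2*θ-2) := habs
    _ ≤ 2*δ*θ*3 * (1/x^2) := by gcongr
    _ = 6*δ*θ/x^2 := by ring

lemma P_bounds (hμ : 0 ≤ μ) (hκ : 0 < κ) (hx : 0 < x) (hx1 : x ≤ 1) :
    κ*x^2 ≤ P μ κ x ∧ P μ κ x ≤ (μ+κ)*x^2 := by
  have h2 : x^2 ≤ 1 := by nlinarith
  have h4 : x^4 ≤ x^2 := by nlinarith [sq_nonneg x, sq_nonneg (x^2)]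
  unfold P
  constructor
  · nlinarith [pow_pos hx 4]
  · nlinarith [mul_le_mul_of_nonneg_left h4 hμ]

lemma D_bounds (hμ : 0 ≤ μ) (hκ : 0 < κ) (hx : 0 < x) (hx1 : x ≤ 1) :
    κ*x ≤ D μ κ x ∧ D μ κ x ≤ (μ+κ)*x := by
  have h3 : x^3 ≤ x := by nlinarith [sq_nonneg x, pow_pos hx 3]
  unfold D
  constructor
  · nlinarith [pow_pos hx 3]
  · nlinarith [mul_le_mul_of_nonneg_left h3 hμ]

lemma Pd_bounds (hμ : 0 ≤ μ) (hκ : 0 < κ) (hx : 0 < x) (hx1 : x ≤ 1) :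
    2*κ*x ≤ Pd μ κ x ∧ Pd μ κ x ≤ (4*μ+2*κ)*x := by
  have h3 : x^3 ≤ x := by nlinarith [sq_nonneg x, pow_pos hx 3]
  unfold Pd
  constructor
  · nlinarith [pow_pos hx 3]
  · nlinarith [mul_le_mul_of_nonneg_left h3 (by linarith : (0:ℝ) ≤ 4*μ)]

lemma N_bounds (hδ : 0 < δ) (hθ : 0 < θ) (hμ : 0 ≤ μ) (hκ : 0 < κ)
    (hx : 0 < x) (hxε : x ≤ ε₀) (hε1 : ε₀ ≤ 1)
    (hκε : 2*(μ+κ)*δ*θ*ε₀^(2*θ) ≤ κ) :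
    κ*x ≤ N δ θ μ κ x ∧ N δ θ μ κ x ≤ (4*μ+2*κ)*(1+δ)*x := by
  have hx1 : x ≤ 1 := hxε.trans hε1
  have hQl := Q_le hδ hθ hx hx1
  have hQg := Q_ge (θ := θ) hδ hx
  have hP := P_bounds hμ hκ hx hx1
  have hQd := Qd_pos hδ hθ hx
  have hPd := Pd_bounds hμ hκ hx hx1
  have hPdpos : 0 < Pd μ κ x := lt_of_lt_of_le (by positivity) hPd.1
  have hmono : x ^ (2*θ) ≤ ε₀ ^ (2*θ) := Real.rpow_le_rpow hx.le hxε (by positivity)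
  have hPQd : P μ κ x * Qd δ θ x ≤ κ*x := by
    have h1 : P μ κ x * Qd δ θ x = (μ*x^2+κ) * (2*δ*θ) * (x^(2*θ-1) * x^2) := by
      unfold P Qd; ring
    have h2 : x^(2*θ-1) * x^2 = x^(2*θ) * x := by
      calc x^(2*θ-1) * x^2 = (x^(2*θ-1)*x)*x := by ring
        _ = x^(2*θ)*x := by rw [rp2 hx]
    rw [h1, h2]
    have h3 : (μ*x^2+κ) ≤ μ+κ := by nlinarith
    have e1 : (0:ℝ) ≤ 2*δ*θ := by positivity
    have step1 : (μ*x^2+κ) * (2*δ*θ) ≤ (μ+κ)*(2*δ*θ) :=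
      mul_le_mul_of_nonneg_right h3 e1
    have step2 : x^(2*θ)*x ≤ ε₀^(2*θ)*x := mul_le_mul_of_nonneg_right hmono hx.le
    have step3 : (μ*x^2+κ) * (2*δ*θ) * (x^(2*θ)*x) ≤ (μ+κ)*(2*δ*θ) * (ε₀^(2*θ)*x) :=
      mul_le_mul step1 step2 (by positivity) (mul_nonneg (by linarith) e1)
    have step4 : (μ+κ)*(2*δ*θ) * (ε₀^(2*θ)*x) ≤ κ*x := by
      rw [show (μ+κ)*(2*δ*θ) * (ε₀^(2*θ)*x) = (2*(μ+κ)*δ*θ*ε₀^(2*θ))*x by ring]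
      exact mul_le_mul_of_nonneg_right hκε hx.le
    linarith
  constructor
  · unfold N
    nlinarith [mul_le_mul_of_nonneg_left hQg hPdpos.le]
  · unfold N
    nlinarith [mul_pos (Ppos hμ hκ hx) hQd,
      mul_le_mul hPd.2 hQl (by linarith) (by positivity)]

lemma F_bounds (hδ : 0 < δ) (hθ : 0 < θ) (hμ : 0 ≤ μ) (hκ : 0 < κ) (hx : 0 < x) (hx1 : x ≤ 1) :
    κ/(1+δ)*x^2 ≤ F δ θ μ κ x ∧ F δ θ μ κ x ≤ (μ+κ)*x^2 := by
  have hQl := Q_le hδ hθ hx hx1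
  have hQg := Q_ge (θ := θ) hδ hx
  have hP := P_bounds hμ hκ hx hx1
  have hQp : 0 < Q δ θ x := by linarith
  have hPp := Ppos hμ hκ hx
  constructor
  · unfold F
    rw [div_mul_eq_mul_div, div_le_div_iff₀ (by positivity) hQp]
    nlinarith [mul_le_mul_of_nonneg_right hP.1 hQp.le, mul_le_mul_of_nonneg_left hQl hPp.le]
  · unfold F
    rw [div_le_iff₀ hQp]
    nlinarith [mul_le_mul_of_nonneg_left hQg (by nlinarith : (0:ℝ) ≤ (μ+κ)*x^2)]

lemma ff_bounds (hδ : 0 < δ) (hθ : 0 < θ) (hμ : 0 ≤ μ) (hκ : 0 < κ) (hx : 0 < x) (hx1 : x ≤ 1) :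
    s0 δ κ * x ≤ ff δ θ μ κ x ∧ ff δ θ μ κ x ≤ sA μ κ * x := by
  have hF := F_bounds (θ := θ) hδ hθ hμ hκ hx hx1
  constructor
  · unfold ff s0
    have h1 : Real.sqrt (κ/(1+δ)) * x = Real.sqrt (κ/(1+δ) * x^2) := by
      rw [Real.sqrt_mul (by positivity), Real.sqrt_sq hx.le]
    rw [h1]
    exact Real.sqrt_le_sqrt hF.1
  · unfold ff sA
    have h1 : Real.sqrt (μ+κ) * x = Real.sqrt ((μ+κ) * x^2) := by
      rw [Real.sqrt_mul (by linarith), Real.sqrt_sq hx.le]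
    rw [h1]
    exact Real.sqrt_le_sqrt hF.2

lemma Fd_bounds (hδ : 0 < δ) (hθ : 0 < θ) (hμ : 0 ≤ μ) (hκ : 0 < κ)
    (hx : 0 < x) (hxε : x ≤ ε₀) (hε1 : ε₀ ≤ 1)
    (hκε : 2*(μ+κ)*δ*θ*ε₀^(2*θ) ≤ κ) :
    κ*x/(1+δ)^2 ≤ Fd δ θ μ κ x ∧ Fd δ θ μ κ x ≤ (4*μ+2*κ)*(1+δ)*x := by
  have hx1 : x ≤ 1 := hxε.trans hε1
  have hN := N_bounds hδ hθ hμ hκ hx hxε hε1 hκε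
  have hQl := Q_le hδ hθ hx hx1
  have hQg := Q_ge (θ := θ) hδ hx
  have hQp : (0:ℝ) < Q δ θ x := by linarith
  have hNpos : 0 < N δ θ μ κ x := lt_of_lt_of_le (by positivity) hN.1
  have hQ2 : (1:ℝ) ≤ (Q δ θ x)^2 := one_le_pow₀ hQg
  have hQ2' : (Q δ θ x)^2 ≤ (1+δ)^2 := by nlinarith
  constructor
  · unfold Fd
    rw [div_le_div_iff₀ (by positivity) (by positivity)]
    nlinarith [mul_le_mul_of_nonneg_left hQ2' (by positivity : (0:ℝ) ≤ κ*x)]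
  · unfold Fd
    rw [div_le_iff₀ (by positivity)]
    nlinarith [mul_le_mul_of_nonneg_left hQ2
      (by positivity : (0:ℝ) ≤ (4*μ+2*κ)*(1+δ)*x)]

lemma fd_bounds (hδ : 0 < δ) (hθ : 0 < θ) (hμ : 0 ≤ μ) (hκ : 0 < κ)
    (hx : 0 < x) (hxε : x ≤ ε₀) (hε1 : ε₀ ≤ 1)
    (hκε : 2*(μ+κ)*δ*θ*ε₀^(2*θ) ≤ κ) :
    cl δ μ κ ≤ fd δ θ μ κ x ∧ fd δ θ μ κ x ≤ c2 δ μ κ := by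
  have hx1 : x ≤ 1 := hxε.trans hε1
  have hFd := Fd_bounds hδ hθ hμ hκ hx hxε hε1 hκε
  have hffb := ff_bounds (θ := θ) hδ hθ hμ hκ hx hx1
  have hs0 := s0_pos hδ hκ
  have hsA := sA_pos hμ hκ
  have hffp := ffpos (θ := θ) hδ hμ hκ hx
  have hFdpos : 0 < Fd δ θ μ κ x := lt_of_lt_of_le (by positivity) hFd.1
  constructor
  · unfold fd cl
    have he : κ / (2*(1+δ)^2 * sA μ κ) = (κ*x/(1+δ)^2) / (2*(sA μ κ*x)) := by
      field_simp
    rw [he]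
    exact div_le_div₀ hFdpos.le hFd.1 (by positivity) (by nlinarith [hffb.2])
  · unfold fd c2
    have he : (4*μ+2*κ)*(1+δ) / (2 * s0 δ κ) = ((4*μ+2*κ)*(1+δ)*x) / (2*(s0 δ κ*x)) := by
      field_simp
    rw [he]
    exact div_le_div₀ (by positivity) hFd.2 (by positivity) (by nlinarith [hffb.1])

set_option maxHeartbeats 1000000 in
lemma Fdd_abs (hδ : 0 < δ) (hθ : 0 < θ) (hθ2 : θ ≤ 2) (hμ : 0 ≤ μ) (hκ : 0 < κ)
    (hx : 0 < x) (hxε : x ≤ ε₀) (hε1 : ε₀ ≤ 1)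
    (hκε : 2*(μ+κ)*δ*θ*ε₀^(2*θ) ≤ κ) :
    |Fdd δ θ μ κ x| ≤ CF δ θ μ κ := by
  have hx1 : x ≤ 1 := hxε.trans hε1
  have hQl := Q_le hδ hθ hx hx1
  have hQg := Q_ge (θ := θ) hδ hx
  have hQp : (0:ℝ) < Q δ θ x := by linarith
  have hP := P_bounds hμ hκ hx hx1
  have hN := N_bounds hδ hθ hμ hκ hx hxε hε1 hκε
  have hNpos : 0 < N δ θ μ κ x := lt_of_lt_of_le (by positivity) hN.1
  have hQd := Qd_pos hδ hθ hx
  have hQdle := Qd_le hδ hθ hx hx1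
  have hQdd := Qdd_abs hδ hθ hθ2 hx hx1
  have hPp := Ppos hμ hκ hx
  have hNd : |Nd δ θ μ κ x| ≤ (12*μ+2*κ)*(1+δ) + 6*(μ+κ)*δ*θ := by
    unfold Nd
    have h1 := abs_sub ((12*μ*x^2 + 2*κ) * Q δ θ x) (P μ κ x * Qdd δ θ x)
    have h2 : |(12*μ*x^2 + 2*κ) * Q δ θ x| ≤ (12*μ+2*κ)*(1+δ) := by
      rw [abs_of_pos (by nlinarith)]
      have ha : 12*μ*x^2 + 2*κ ≤ 12*μ+2*κ := by nlinarith [mul_le_mul_of_nonneg_left (by nlinarith : x^2 ≤ 1) hμ]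
      nlinarith [mul_le_mul ha hQl (by linarith) (by linarith)]
    have h3 : |P μ κ x * Qdd δ θ x| ≤ 6*(μ+κ)*δ*θ := by
      rw [abs_mul, abs_of_pos hPp]
      have hstep : P μ κ x * |Qdd δ θ x| ≤ ((μ+κ)*x^2) * (6*δ*θ/x^2) :=
        mul_le_mul hP.2 hQdd (abs_nonneg _) (by nlinarith)
      have he : ((μ+κ)*x^2) * (6*δ*θ/x^2) = 6*(μ+κ)*δ*θ := by
        field_simp
      linarith [hstep, he.le]
    linarith
  have hNQd : |2 * N δ θ μ κ x * Qd δ θ x| ≤ 4*δ*θ*(4*μ+2*κ)*(1+δ) := by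
    rw [abs_of_pos (by positivity)]
    have hstep : 2 * N δ θ μ κ x * Qd δ θ x ≤ 2 * ((4*μ+2*κ)*(1+δ)*x) * (2*δ*θ/x) := by
      have := mul_le_mul (mul_le_mul_of_nonneg_left hN.2 (by norm_num : (0:ℝ) ≤ 2))
        hQdle hQd.le (by positivity)
      linarith
    have he : 2 * ((4*μ+2*κ)*(1+δ)*x) * (2*δ*θ/x) = 4*δ*θ*(4*μ+2*κ)*(1+δ) := by
      field_simp; ring
    linarith [hstep, he.le]
  have hQ3 : (1:ℝ) ≤ (Q δ θ x)^3 := one_le_pow₀ hQg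
  have hnum : |Nd δ θ μ κ x * Q δ θ x - 2 * N δ θ μ κ x * Qd δ θ x| ≤ CF δ θ μ κ := by
    have h1 := abs_sub (Nd δ θ μ κ x * Q δ θ x) (2 * N δ θ μ κ x * Qd δ θ x)
    have h2 : |Nd δ θ μ κ x * Q δ θ x| ≤ ((12*μ+2*κ)*(1+δ) + 6*(μ+κ)*δ*θ)*(1+δ) := by
      rw [abs_mul, abs_of_pos hQp]
      exact mul_le_mul hNd hQl (by linarith) (by positivity)
    unfold CF
    linarith
  unfold Fdd
  rw [abs_div, abs_of_pos (by positivity : (0:ℝ) < (Q δ θ x)^3)]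
  rw [div_le_iff₀ (by positivity)]
  nlinarith [hnum, abs_nonneg (Nd δ θ μ κ x * Q δ θ x - 2 * N δ θ μ κ x * Qd δ θ x),
    mul_le_mul_of_nonneg_left hQ3 (CF_pos hδ hθ hμ hκ).le]

lemma Fd_bounds' : True := trivial

lemma g_bounds (hδ : 0 < δ) (hθ : 0 < θ) (hμ : 0 ≤ μ) (hκ : 0 < κ) (hx : 0 < x) (hx1 : x ≤ 1) :
    0 < g δ θ μ κ x ∧ g δ θ μ κ x ≤ (1+δ)/(κ*x) := by
  have hQl := Q_le hδ hθ hx hx1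
  have hQg := Q_ge (θ := θ) hδ hx
  have hQp : (0:ℝ) < Q δ θ x := by linarith
  have hD := D_bounds hμ hκ hx hx1
  have hDp := Dpos hμ hκ hx
  have hexp : Real.exp (-x^2) ≤ 1 := Real.exp_le_one_iff.mpr (by nlinarith)
  have hexpp : (0:ℝ) < Real.exp (-x^2) := Real.exp_pos _
  constructor
  · unfold g; positivity
  · unfold g
    exact div_le_div₀ (by positivity) (by nlinarith [mul_le_mul hexp hQl hQp.le zero_le_one])
      (by positivity) hD.1

set_option maxHeartbeats 1000000 in
lemma gd_abs (hδ : 0 < δ) (hθ : 0 < θ) (hμ : 0 ≤ μ) (hκ : 0 < κ) (hx : 0 < x) (hx1 : x ≤ 1) :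
    |gd δ θ μ κ x| ≤ Cg δ θ μ κ / x^2 := by
  have hQl := Q_le hδ hθ hx hx1
  have hQg := Q_ge (θ := θ) hδ hx
  have hQp : (0:ℝ) < Q δ θ x := by linarith
  have hD := D_bounds hμ hκ hx hx1
  have hDp := Dpos hμ hκ hx
  have hQd := Qd_pos hδ hθ hx
  have hQdle := Qd_le hδ hθ hx hx1
  have hexp : Real.exp (-x^2) ≤ 1 := Real.exp_le_one_iff.mpr (by nlinarith)
  have hexpp : (0:ℝ) < Real.exp (-x^2) := Real.exp_pos _
  have hDd1 : Dd μ κ x ≤ 3*μ+κ := by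
    unfold Dd; nlinarith [mul_le_mul_of_nonneg_left (by nlinarith : x^2 ≤ 1) (by linarith : (0:ℝ) ≤ 3*μ)]
  have hDd0 : 0 < Dd μ κ x := by unfold Dd; nlinarith [sq_nonneg x]
  have hA : |(Qd δ θ x - 2*x*Q δ θ x) * D μ κ x - Q δ θ x * Dd μ κ x|
      ≤ 2*δ*θ*(μ+κ) + 2*(1+δ)*(μ+κ) + (1+δ)*(3*μ+κ) := by
    have h1 := abs_sub ((Qd δ θ x - 2*x*Q δ θ x) * D μ κ x) (Q δ θ x * Dd μ κ x)
    have h2 : |Qd δ θ x - 2*x*Q δ θ x| ≤ 2*δ*θ/x + 2*x*(1+δ) := by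
      have hb : 0 < 2*x*Q δ θ x := mul_pos (by positivity) hQp
      have htri2 := abs_sub (Qd δ θ x) (2*x*Q δ θ x)
      rw [abs_of_pos hQd, abs_of_pos hb] at htri2
      nlinarith [mul_le_mul_of_nonneg_left hQl (by positivity : (0:ℝ) ≤ 2*x)]
    have h3 : |(Qd δ θ x - 2*x*Q δ θ x) * D μ κ x| ≤ (2*δ*θ/x + 2*x*(1+δ)) * ((μ+κ)*x) := by
      rw [abs_mul, abs_of_pos hDp]
      exact mul_le_mul h2 hD.2 hDp.le (by positivity)
    have he : (2*δ*θ/x + 2*x*(1+δ)) * ((μ+κ)*x) = 2*δ*θ*(μ+κ) + 2*(1+δ)*(μ+κ)*x^2 := by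
      field_simp
    have h4 : |(Qd δ θ x - 2*x*Q δ θ x) * D μ κ x| ≤ 2*δ*θ*(μ+κ) + 2*(1+δ)*(μ+κ) := by
      rw [he] at h3
      nlinarith [mul_le_mul_of_nonneg_left (by nlinarith : x^2 ≤ 1)
        (by positivity : (0:ℝ) ≤ 2*(1+δ)*(μ+κ))]
    have h5 : |Q δ θ x * Dd μ κ x| ≤ (1+δ)*(3*μ+κ) := by
      rw [abs_mul, abs_of_pos hQp, abs_of_pos hDd0]
      exact mul_le_mul hQl hDd1 hDd0.le (by linarith)
    linarith
  unfold gd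
  rw [abs_div, abs_mul, abs_of_pos hexpp, abs_of_pos (by positivity : (0:ℝ) < (D μ κ x)^2)]
  have hDsq : κ^2*x^2 ≤ (D μ κ x)^2 := by
    nlinarith [hD.1, mul_pos hκ hx]
  have hnum : Real.exp (-x^2) * |(Qd δ θ x - 2*x*Q δ θ x) * D μ κ x - Q δ θ x * Dd μ κ x|
      ≤ 2*δ*θ*(μ+κ) + 2*(1+δ)*(μ+κ) + (1+δ)*(3*μ+κ) := by
    nlinarith [abs_nonneg ((Qd δ θ x - 2*x*Q δ θ x) * D μ κ x - Q δ θ x * Dd μ κ x),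
      mul_le_mul hexp hA (abs_nonneg _) zero_le_one]
  calc Real.exp (-x^2) * |(Qd δ θ x - 2*x*Q δ θ x) * D μ κ x - Q δ θ x * Dd μ κ x| / (D μ κ x)^2
      ≤ (2*δ*θ*(μ+κ) + 2*(1+δ)*(μ+κ) + (1+δ)*(3*μ+κ)) / (κ^2*x^2) :=
        div_le_div₀ (by positivity) hnum (by positivity) hDsq
    _ = Cg δ θ μ κ / x^2 := by unfold Cg; rw [div_div]

set_option maxHeartbeats 1000000 in
lemma fdd_abs (hδ : 0 < δ) (hθ : 0 < θ) (hθ2 : θ ≤ 2) (hμ : 0 ≤ μ) (hκ : 0 < κ)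
    (hx : 0 < x) (hxε : x ≤ ε₀) (hε1 : ε₀ ≤ 1)
    (hκε : 2*(μ+κ)*δ*θ*ε₀^(2*θ) ≤ κ) :
    |fdd δ θ μ κ x| ≤ C5 δ θ μ κ / x := by
  have hx1 : x ≤ 1 := hxε.trans hε1
  have hFddb := Fdd_abs hδ hθ hθ2 hμ hκ hx hxε hε1 hκε
  have hFd := Fd_bounds hδ hθ hμ hκ hx hxε hε1 hκε
  have hF := F_bounds (θ := θ) hδ hθ hμ hκ hx hx1
  have hffb := ff_bounds (θ := θ) hδ hθ hμ hκ hx hx1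
  have hs0 := s0_pos hδ hκ
  have hffp := ffpos (θ := θ) hδ hμ hκ hx
  have hFp := Fpos (θ := θ) hδ hμ hκ hx
  have hFdpos : 0 < Fd δ θ μ κ x := lt_of_lt_of_le (by positivity) hFd.1
  have hCF := CF_pos hδ hθ hμ hκ
  have h1 : |Fdd δ θ μ κ x / (2 * ff δ θ μ κ x)| ≤ CF δ θ μ κ / (2 * (s0 δ κ * x)) := by
    rw [abs_div, abs_of_pos (mul_pos two_pos hffp)]
    exact div_le_div₀ hCF.le hFddb (by positivity) (by nlinarith [hffb.1])
  have h2 : |(Fd δ θ μ κ x)^2 / (4 * F δ θ μ κ x * ff δ θ μ κ x)|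
      ≤ ((4*μ+2*κ)*(1+δ)*x)^2 / (4 * (κ/(1+δ)*x^2) * (s0 δ κ * x)) := by
    rw [abs_div, abs_of_pos (pow_pos hFdpos 2),
      abs_of_pos (mul_pos (mul_pos (by norm_num : (0:ℝ) < 4) hFp) hffp)]
    refine div_le_div₀ (by positivity) ?_ (by positivity) ?_
    · exact pow_le_pow_left₀ hFdpos.le hFd.2 2
    · have e1 : 4 * (κ/(1+δ)*x^2) ≤ 4 * F δ θ μ κ x := by nlinarith [hF.1]
      exact mul_le_mul e1 hffb.1 (by positivity) (by positivity)
  have he1 : CF δ θ μ κ / (2 * (s0 δ κ * x)) = CF δ θ μ κ / (2*s0 δ κ) / x := by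
    rw [div_div, ← mul_assoc]
  have he2 : ((4*μ+2*κ)*(1+δ)*x)^2 / (4 * (κ/(1+δ)*x^2) * (s0 δ κ * x))
      = (4*μ+2*κ)^2*(1+δ)^3/(4*κ*s0 δ κ) / x := by
    field_simp
  have htri := abs_sub (Fdd δ θ μ κ x / (2 * ff δ θ μ κ x))
    ((Fd δ θ μ κ x)^2 / (4 * F δ θ μ κ x * ff δ θ μ κ x))
  unfold fdd C5
  rw [he1] at h1
  rw [he2] at h2
  rw [add_div]
  linarith

end bounds

noncomputable def uu (δ θ μ κ t x : ℝ) : ℝ := g δ θ μ κ x / (2*t*fd δ θ μ κ x)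
noncomputable def uud (δ θ μ κ t x : ℝ) : ℝ :=
  (gd δ θ μ κ x * fd δ θ μ κ x - g δ θ μ κ x * fdd δ θ μ κ x) / (2*t*(fd δ θ μ κ x)^2)
noncomputable def vv (δ θ μ κ t x : ℝ) : ℝ := Real.sin (2*t*ff δ θ μ κ x)
noncomputable def vvd (δ θ μ κ t x : ℝ) : ℝ := Real.cos (2*t*ff δ θ μ κ x) * (2*t*fd δ θ μ κ x)

section derivs2

variable {δ θ μ κ ε₀ t x : ℝ}

lemma hasDerivAt_uu (hδ : 0 < δ) (hθ : 0 < θ) (hμ : 0 ≤ μ) (hκ : 0 < κ) (ht : 0 < t)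
    (hx : 0 < x) (hxε : x ≤ ε₀) (hε1 : ε₀ ≤ 1) (hκε : 2*(μ+κ)*δ*θ*ε₀^(2*θ) ≤ κ) :
    HasDerivAt (uu δ θ μ κ t) (uud δ θ μ κ t x) x := by
  have hfdb := fd_bounds hδ hθ hμ hκ hx hxε hε1 hκε
  have hfdpos : 0 < fd δ θ μ κ x := lt_of_lt_of_le (cl_pos hδ hμ hκ) hfdb.1
  have h := (hasDerivAt_g (θ := θ) hδ hμ hκ hx).div
    ((hasDerivAt_fd (θ := θ) hδ hμ hκ hx).const_mul (2*t))
    (by positivity : 2*t*fd δ θ μ κ x ≠ 0)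
  refine h.congr_deriv ?_
  unfold uud
  field_simp

lemma hasDerivAt_vv (hδ : 0 < δ) (hμ : 0 ≤ μ) (hκ : 0 < κ) (hx : 0 < x) :
    HasDerivAt (vv δ θ μ κ t) (vvd δ θ μ κ t x) x := by
  have h := ((hasDerivAt_ff (θ := θ) hδ hμ hκ hx).const_mul (2*t)).sin
  exact h

lemma continuousAt_gd (hδ : 0 < δ) (hθ : 0 < θ) (hμ : 0 ≤ μ) (hκ : 0 < κ) (hx : 0 < x) :
    ContinuousAt (gd δ θ μ κ) x := by
  have hD := (hasDerivAt_D (μ := μ) (κ := κ) (x := x)).continuousAt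
  have hQ := (hasDerivAt_Q (δ := δ) (θ := θ) hx).continuousAt
  have hQd := (hasDerivAt_Qd (δ := δ) (θ := θ) hx).continuousAt
  have hDd : ContinuousAt (Dd μ κ) x := by unfold Dd; fun_prop
  have hexp : ContinuousAt (fun y : ℝ => Real.exp (-y^2)) x := by fun_prop
  have hDne : (D μ κ x)^2 ≠ 0 := (pow_pos (Dpos hμ hκ hx) 2).ne'
  exact (hexp.mul (((hQd.sub ((continuousAt_const.mul continuousAt_id).mul hQ)).mul hD).sub
    (hQ.mul hDd))).div (hD.pow 2) hDne

lemma continuousAt_fdd (hδ : 0 < δ) (hθ : 0 < θ) (hμ : 0 ≤ μ) (hκ : 0 < κ) (hx : 0 < x) :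
    ContinuousAt (fdd δ θ μ κ) x := by
  have hQ := (hasDerivAt_Q (δ := δ) (θ := θ) hx).continuousAt
  have hQd := (hasDerivAt_Qd (δ := δ) (θ := θ) hx).continuousAt
  have hN := (hasDerivAt_N (δ := δ) (θ := θ) (μ := μ) (κ := κ) hx).continuousAt
  have hF := (hasDerivAt_F (θ := θ) (μ := μ) (κ := κ) hδ hx).continuousAt
  have hff := (hasDerivAt_ff (θ := θ) hδ hμ hκ hx).continuousAt
  have hFd := (hasDerivAt_Fd (θ := θ) (μ := μ) (κ := κ) hδ hx).continuousAt
  have hP := (hasDerivAt_P (μ := μ) (κ := κ) (x := x)).continuousAt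
  have hQdd : ContinuousAt (Qdd δ θ) x :=
    continuousAt_const.mul (Real.continuousAt_rpow_const x _ (Or.inl hx.ne'))
  have hNd : ContinuousAt (Nd δ θ μ κ) x := by
    have hpoly : ContinuousAt (fun y : ℝ => 12*μ*y^2 + 2*κ) x := by fun_prop
    exact (hpoly.mul hQ).sub (hP.mul hQdd)
  have hQp : (0:ℝ) < Q δ θ x := Qpos hδ hx
  have hFdd : ContinuousAt (Fdd δ θ μ κ) x :=
    ((hNd.mul hQ).sub ((continuousAt_const.mul hN).mul hQd)).div (hQ.pow 3)
      (pow_pos hQp 3).ne'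
  have hffp := ffpos (θ := θ) hδ hμ hκ hx
  have hFp := Fpos (θ := θ) hδ hμ hκ hx
  exact (hFdd.div (continuousAt_const.mul hff) (mul_pos two_pos hffp).ne').sub
    ((hFd.pow 2).div ((continuousAt_const.mul hF).mul hff) (mul_pos (mul_pos (by norm_num) hFp) hffp).ne')

lemma continuousAt_uud (hδ : 0 < δ) (hθ : 0 < θ) (hμ : 0 ≤ μ) (hκ : 0 < κ) (ht : 0 < t)
    (hx : 0 < x) (hxε : x ≤ ε₀) (hε1 : ε₀ ≤ 1) (hκε : 2*(μ+κ)*δ*θ*ε₀^(2*θ) ≤ κ) :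
    ContinuousAt (uud δ θ μ κ t) x := by
  have hfdb := fd_bounds hδ hθ hμ hκ hx hxε hε1 hκε
  have hfdpos : 0 < fd δ θ μ κ x := lt_of_lt_of_le (cl_pos hδ hμ hκ) hfdb.1
  have hg := (hasDerivAt_g (θ := θ) hδ hμ hκ hx).continuousAt
  have hfd := (hasDerivAt_fd (θ := θ) hδ hμ hκ hx).continuousAt
  have hgd := continuousAt_gd (θ := θ) hδ hθ hμ hκ hx
  have hfdd := continuousAt_fdd (θ := θ) hδ hθ hμ hκ hx
  exact ((hgd.mul hfd).sub (hg.mul hfdd)).div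
    (continuousAt_const.mul (hfd.pow 2)) (by positivity)

lemma continuousAt_vvd (hδ : 0 < δ) (hμ : 0 ≤ μ) (hκ : 0 < κ) (hx : 0 < x) :
    ContinuousAt (vvd δ θ μ κ t) x := by
  have hff := (hasDerivAt_ff (θ := θ) hδ hμ hκ hx).continuousAt
  have hfd := (hasDerivAt_fd (θ := θ) hδ hμ hκ hx).continuousAt
  exact (Real.continuous_cos.continuousAt.comp (hff.const_mul (2*t))).mul (hfd.const_mul (2*t))

lemma uu_le (hδ : 0 < δ) (hθ : 0 < θ) (hμ : 0 ≤ μ) (hκ : 0 < κ) (ht : 0 < t)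
    (hx : 0 < x) (hxε : x ≤ ε₀) (hε1 : ε₀ ≤ 1) (hκε : 2*(μ+κ)*δ*θ*ε₀^(2*θ) ≤ κ) :
    0 < uu δ θ μ κ t x ∧ uu δ θ μ κ t x ≤ (1+δ)/(κ*x) / (2*t*cl δ μ κ) := by
  have hx1 : x ≤ 1 := hxε.trans hε1
  have hfdb := fd_bounds hδ hθ hμ hκ hx hxε hε1 hκε
  have hcl := cl_pos hδ hμ hκ
  have hfdpos : 0 < fd δ θ μ κ x := lt_of_lt_of_le hcl hfdb.1
  have hgb := g_bounds (θ := θ) hδ hθ hμ hκ hx hx1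
  constructor
  · exact div_pos hgb.1 (mul_pos (mul_pos two_pos ht) hfdpos)
  · unfold uu
    exact div_le_div₀ (by positivity) hgb.2 (mul_pos (mul_pos two_pos ht) hcl)
      (by nlinarith [hfdb.1])

set_option maxHeartbeats 1000000 in
lemma uud_abs (hδ : 0 < δ) (hθ : 0 < θ) (hθ2 : θ ≤ 2) (hμ : 0 ≤ μ) (hκ : 0 < κ) (ht : 0 < t)
    (hx : 0 < x) (hxε : x ≤ ε₀) (hε1 : ε₀ ≤ 1) (hκε : 2*(μ+κ)*δ*θ*ε₀^(2*θ) ≤ κ) :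
    |uud δ θ μ κ t x| ≤ (Cg δ θ μ κ * c2 δ μ κ + (1+δ)*C5 δ θ μ κ/κ)/(cl δ μ κ)^2/(2*t) * (x^2)⁻¹ := by
  have hx1 : x ≤ 1 := hxε.trans hε1
  have hfdb := fd_bounds hδ hθ hμ hκ hx hxε hε1 hκε
  have hcl := cl_pos hδ hμ hκ
  have hc2 := c2_pos hδ hμ hκ
  have hCg := Cg_pos hδ hθ hμ hκ
  have hC5 := C5_pos hδ hθ hμ hκ
  have hfdpos : 0 < fd δ θ μ κ x := lt_of_lt_of_le hcl hfdb.1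
  have hgb := g_bounds (θ := θ) hδ hθ hμ hκ hx hx1
  have hgda := gd_abs hδ hθ hμ hκ hx hx1
  have hfdda := fdd_abs hδ hθ hθ2 hμ hκ hx hxε hε1 hκε
  have t1 : |gd δ θ μ κ x * fd δ θ μ κ x| ≤ (Cg δ θ μ κ/x^2) * c2 δ μ κ := by
    rw [abs_mul, abs_of_pos hfdpos]
    exact mul_le_mul hgda hfdb.2 hfdpos.le (by positivity)
  have t2 : |g δ θ μ κ x * fdd δ θ μ κ x| ≤ ((1+δ)/(κ*x)) * (C5 δ θ μ κ/x) := by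
    rw [abs_mul, abs_of_pos hgb.1]
    exact mul_le_mul hgb.2 hfdda (abs_nonneg _) (by positivity)
  have hnum : |gd δ θ μ κ x * fd δ θ μ κ x - g δ θ μ κ x * fdd δ θ μ κ x|
      ≤ (Cg δ θ μ κ * c2 δ μ κ + (1+δ)*C5 δ θ μ κ/κ)/x^2 := by
    have htri := abs_sub (gd δ θ μ κ x * fd δ θ μ κ x) (g δ θ μ κ x * fdd δ θ μ κ x)
    have he : (Cg δ θ μ κ/x^2) * c2 δ μ κ + ((1+δ)/(κ*x)) * (C5 δ θ μ κ/x)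
        = (Cg δ θ μ κ * c2 δ μ κ + (1+δ)*C5 δ θ μ κ/κ)/x^2 := by
      field_simp
    linarith [he.le, he.ge]
  have hden : 2*t*(cl δ μ κ)^2 ≤ 2*t*(fd δ θ μ κ x)^2 := by
    have := pow_le_pow_left₀ hcl.le hfdb.1 2
    nlinarith
  unfold uud
  rw [abs_div, abs_of_pos (by positivity : (0:ℝ) < 2*t*(fd δ θ μ κ x)^2)]
  calc |gd δ θ μ κ x * fd δ θ μ κ x - g δ θ μ κ x * fdd δ θ μ κ x| / (2*t*(fd δ θ μ κ x)^2)
      ≤ ((Cg δ θ μ κ * c2 δ μ κ + (1+δ)*C5 δ θ μ κ/κ)/x^2) / (2*t*(cl δ μ κ)^2) :=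
        div_le_div₀ (by positivity) hnum (by positivity) hden
    _ = (Cg δ θ μ κ * c2 δ μ κ + (1+δ)*C5 δ θ μ κ/κ)/(cl δ μ κ)^2/(2*t) * (x^2)⁻¹ := by
        rw [div_div, div_div, div_mul_eq_div_div, div_div]
        ring_nf

end derivs2

set_option maxHeartbeats 2000000 in
lemma key (δ θ μ κ ε₀ : ℝ) (hδ : 0 < δ) (hθ : 0 < θ) (hθ2 : θ ≤ 2) (hμ : 0 ≤ μ) (hκ : 0 < κ)
    (hε0 : 0 < ε₀) (hε1 : ε₀ ≤ 1) (hκε : 2*(μ+κ)*δ*θ*ε₀^(2*θ) ≤ κ) :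
    ∃ C : ℝ, 0 < C ∧ ∀ t : ℝ, 1 ≤ t → 1/t < ε₀ →
      |∫ x in (1/t)..ε₀, g δ θ μ κ x * Real.cos (2*t*ff δ θ μ κ x)| ≤ C := by
  have hcl := cl_pos hδ hμ hκ
  have hc2 := c2_pos hδ hμ hκ
  have hCg := Cg_pos hδ hθ hμ hκ
  have hC5 := C5_pos hδ hθ hμ hκ
  set K := (Cg δ θ μ κ * c2 δ μ κ + (1+δ)*C5 δ θ μ κ/κ)/(cl δ μ κ)^2 with hKdef
  have hKpos : 0 < K := by rw [hKdef]; positivity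
  refine ⟨(1+δ)/(2*κ*cl δ μ κ) + (1+δ)/(2*κ*cl δ μ κ*ε₀) + K/2, by positivity, ?_⟩
  intro t ht hta
  have ht0 : 0 < t := lt_of_lt_of_le one_pos ht
  have ha0 : 0 < 1/t := by positivity
  have hab : 1/t ≤ ε₀ := hta.le
  have hIcc : Set.uIcc (1/t) ε₀ = Set.Icc (1/t) ε₀ := Set.uIcc_of_le hab
  have hmem : ∀ x ∈ Set.Icc (1/t) ε₀, 0 < x ∧ x ≤ ε₀ :=
    fun x hx => ⟨lt_of_lt_of_le ha0 hx.1, hx.2⟩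
  have hu : ∀ x ∈ Set.uIcc (1/t) ε₀, HasDerivAt (uu δ θ μ κ t) (uud δ θ μ κ t x) x := by
    intro x hx
    rw [hIcc] at hx
    exact hasDerivAt_uu hδ hθ hμ hκ ht0 (hmem x hx).1 (hmem x hx).2 hε1 hκε
  have hv : ∀ x ∈ Set.uIcc (1/t) ε₀, HasDerivAt (vv δ θ μ κ t) (vvd δ θ μ κ t x) x := by
    intro x hx
    rw [hIcc] at hx
    exact hasDerivAt_vv hδ hμ hκ (hmem x hx).1
  have hiu : IntervalIntegrable (uud δ θ μ κ t) volume (1/t) ε₀ := by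
    apply ContinuousOn.intervalIntegrable
    rw [hIcc]
    intro x hx
    exact (continuousAt_uud hδ hθ hμ hκ ht0 (hmem x hx).1 (hmem x hx).2 hε1
      hκε).continuousWithinAt
  have hiv : IntervalIntegrable (vvd δ θ μ κ t) volume (1/t) ε₀ := by
    apply ContinuousOn.intervalIntegrable
    rw [hIcc]
    intro x hx
    exact (continuousAt_vvd hδ hμ hκ (hmem x hx).1).continuousWithinAt
  have hIBP := intervalIntegral.integral_mul_deriv_eq_deriv_mul hu hv hiu hiv
  have hcong : ∫ x in (1/t)..ε₀, g δ θ μ κ x * Real.cos (2*t*ff δ θ μ κ x)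
      = ∫ x in (1/t)..ε₀, uu δ θ μ κ t x * vvd δ θ μ κ t x := by
    apply intervalIntegral.integral_congr
    rw [hIcc]
    intro x hx
    have hx0 := (hmem x hx).1
    have hfdb := fd_bounds hδ hθ hμ hκ hx0 (hmem x hx).2 hε1 hκε
    have hfdpos : 0 < fd δ θ μ κ x := lt_of_lt_of_le hcl hfdb.1
    unfold uu vvd
    field_simp
  -- bound on the remainder integral
  have habs_vv : ∀ x : ℝ, |vv δ θ μ κ t x| ≤ 1 := by
    intro x
    exact abs_le.mpr ⟨Real.neg_one_le_sin _, Real.sin_le_one _⟩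
  have hbd : |∫ x in (1/t)..ε₀, uud δ θ μ κ t x * vv δ θ μ κ t x| ≤ K/2 := by
    have h1 : |∫ x in (1/t)..ε₀, uud δ θ μ κ t x * vv δ θ μ κ t x|
        ≤ ∫ x in (1/t)..ε₀, |uud δ θ μ κ t x * vv δ θ μ κ t x| := by
      simpa only [Real.norm_eq_abs] using intervalIntegral.norm_integral_le_integral_norm
        (f := fun x => uud δ θ μ κ t x * vv δ θ μ κ t x) (μ := volume) hab
    have hiuv : IntervalIntegrable (fun x => |uud δ θ μ κ t x * vv δ θ μ κ t x|)
        volume (1/t) ε₀ := by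
      apply ContinuousOn.intervalIntegrable
      rw [hIcc]
      intro x hx
      exact (((continuousAt_uud hδ hθ hμ hκ ht0 (hmem x hx).1 (hmem x hx).2 hε1 hκε).mul
        ((hasDerivAt_vv (t := t) hδ hμ hκ (hmem x hx).1).continuousAt)).abs).continuousWithinAt
    have hiB : IntervalIntegrable (fun x => K/(2*t) * (x^2)⁻¹) volume (1/t) ε₀ := by
      apply ContinuousOn.intervalIntegrable
      rw [hIcc]
      intro x hx
      have hx0 := (hmem x hx).1
      exact (continuousAt_const.mul ((continuousAt_id.pow 2).inv₀
        (pow_ne_zero 2 hx0.ne'))).continuousWithinAt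
    have h2 : ∫ x in (1/t)..ε₀, |uud δ θ μ κ t x * vv δ θ μ κ t x|
        ≤ ∫ x in (1/t)..ε₀, K/(2*t) * (x^2)⁻¹ := by
      apply intervalIntegral.integral_mono_on hab hiuv hiB
      intro x hx
      have hx0 := (hmem x hx).1
      have hua := uud_abs hδ hθ hθ2 hμ hκ ht0 hx0 (hmem x hx).2 hε1 hκε
      rw [abs_mul]
      calc |uud δ θ μ κ t x| * |vv δ θ μ κ t x| ≤ (K/(2*t) * (x^2)⁻¹) * 1 := by
            apply mul_le_mul _ (habs_vv x) (abs_nonneg _) (by positivity)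
            rw [hKdef]
            exact hua
        _ = K/(2*t) * (x^2)⁻¹ := by ring
    have hderiv : ∀ x ∈ Set.uIcc (1/t) ε₀, HasDerivAt (fun y => -y⁻¹) ((x^2)⁻¹) x := by
      intro x hx
      rw [hIcc] at hx
      have := (hasDerivAt_inv (hmem x hx).1.ne').neg; rw [neg_neg] at this; exact this
    have hint : IntervalIntegrable (fun x : ℝ => (x^2)⁻¹) volume (1/t) ε₀ := by
      apply ContinuousOn.intervalIntegrable
      rw [hIcc]
      intro x hx
      have hx0 := (hmem x hx).1
      exact ((continuousAt_id.pow 2).inv₀ (pow_ne_zero 2 hx0.ne')).continuousWithinAt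
    have h3 : ∫ x in (1/t)..ε₀, K/(2*t) * (x^2)⁻¹ = K/(2*t) * ((1/t)⁻¹ - ε₀⁻¹) := by
      rw [intervalIntegral.integral_const_mul]
      rw [intervalIntegral.integral_eq_sub_of_hasDerivAt hderiv hint]
      ring
    have h4 : K/(2*t) * ((1/t)⁻¹ - ε₀⁻¹) ≤ K/2 := by
      rw [one_div, inv_inv]
      have he : 0 < ε₀⁻¹ := by positivity
      have h5 : K/(2*t) * (t - ε₀⁻¹) ≤ K/(2*t) * t :=
        mul_le_mul_of_nonneg_left (by linarith) (by positivity)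
      have h6 : K/(2*t) * t = K/2 := by field_simp
      linarith
    linarith
  -- boundary values
  have hendb : |uu δ θ μ κ t ε₀ * vv δ θ μ κ t ε₀| ≤ (1+δ)/(2*κ*cl δ μ κ*ε₀) := by
    have hU := uu_le hδ hθ hμ hκ ht0 hε0 le_rfl hε1 hκε
    rw [abs_mul, abs_of_pos hU.1]
    calc uu δ θ μ κ t ε₀ * |vv δ θ μ κ t ε₀| ≤ ((1+δ)/(κ*ε₀) / (2*t*cl δ μ κ)) * 1 :=
          mul_le_mul hU.2 (habs_vv _) (abs_nonneg _) (by positivity)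
      _ = (1+δ)/(κ*ε₀*(2*t*cl δ μ κ)) := by rw [mul_one, div_div]
      _ ≤ (1+δ)/(2*κ*cl δ μ κ*ε₀) := by
          apply div_le_div₀ (by positivity) le_rfl (by positivity)
          nlinarith [mul_pos (mul_pos hκ hcl) hε0]
  have henda : |uu δ θ μ κ t (1/t) * vv δ θ μ κ t (1/t)| ≤ (1+δ)/(2*κ*cl δ μ κ) := by
    have hU := uu_le hδ hθ hμ hκ ht0 ha0 hab hε1 hκε
    rw [abs_mul, abs_of_pos hU.1]
    calc uu δ θ μ κ t (1/t) * |vv δ θ μ κ t (1/t)|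
        ≤ ((1+δ)/(κ*(1/t)) / (2*t*cl δ μ κ)) * 1 :=
          mul_le_mul hU.2 (habs_vv _) (abs_nonneg _) (by positivity)
      _ = (1+δ)/(2*κ*cl δ μ κ) := by
          rw [mul_one]
          field_simp
  rw [hcong, hIBP]
  have htri1 := abs_sub (uu δ θ μ κ t ε₀ * vv δ θ μ κ t ε₀
    - uu δ θ μ κ t (1/t) * vv δ θ μ κ t (1/t))
    (∫ x in (1/t)..ε₀, uud δ θ μ κ t x * vv δ θ μ κ t x)
  have htri2 := abs_sub (uu δ θ μ κ t ε₀ * vv δ θ μ κ t ε₀)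
    (uu δ θ μ κ t (1/t) * vv δ θ μ κ t (1/t))
  linarith

end S13

open S13 in
theorem stmt13 (δ θ μ κ : ℝ) (hδ : 0 < δ) (hθ : 0 < θ) (hθ2 : θ ≤ 2)
    (hμ : 0 ≤ μ) (hκ : 0 < κ)
    (ε₀ : ℝ) (hε₀ : ε₀ = min ((κ / (2 * (μ + κ) * δ * θ)) ^ (1 / (2 * θ))) 1)
    (f : ℝ → ℝ)
    (hf : ∀ r : ℝ, f r = Real.sqrt ((μ * r ^ 4 + κ * r ^ 2) / (1 + δ * r ^ (2 * θ)))) :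
    ∃ C : ℝ, 0 < C ∧ ∃ T : ℝ, ∀ t ≥ T,
      |∫ r in Set.Icc (1 / t) ε₀,
          Real.exp (-r ^ 2) * Real.cos (2 * t * f r) * (1 + δ * r ^ (2 * θ)) / (μ * r ^ 3 + κ * r)|
        ≤ C := by
  have hA : 0 < μ + κ := by linarith
  set X : ℝ := κ / (2 * (μ + κ) * δ * θ) with hXdef
  have hX : 0 < X := by positivity
  have hε0 : 0 < ε₀ := by
    rw [hε₀]
    exact lt_min (Real.rpow_pos_of_pos hX _) one_pos
  have hε1 : ε₀ ≤ 1 := by rw [hε₀]; exact min_le_right _ _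
  have hκε : 2*(μ+κ)*δ*θ*ε₀^(2*θ) ≤ κ := by
    have h1 : ε₀ ≤ X ^ (1/(2*θ)) := by rw [hε₀]; exact min_le_left _ _
    have h2 : ε₀ ^ (2*θ) ≤ (X ^ (1/(2*θ))) ^ (2*θ) :=
      Real.rpow_le_rpow hε0.le h1 (by positivity)
    have h3 : (X ^ (1/(2*θ))) ^ (2*θ) = X := by
      rw [← Real.rpow_mul hX.le]
      rw [show (1/(2*θ))*(2*θ) = 1 from by field_simp]
      exact Real.rpow_one X
    rw [h3] at h2
    calc 2*(μ+κ)*δ*θ*ε₀^(2*θ) ≤ 2*(μ+κ)*δ*θ*X :=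
          mul_le_mul_of_nonneg_left h2 (by positivity)
      _ = κ := by rw [hXdef]; field_simp
  obtain ⟨C, hC, hCt⟩ := key δ θ μ κ ε₀ hδ hθ hθ2 hμ hκ hε0 hε1 hκε
  refine ⟨C, hC, max (2/ε₀) 1, ?_⟩
  intro t htT
  have ht1 : 1 ≤ t := le_trans (le_max_right _ _) htT
  have ht0 : 0 < t := lt_of_lt_of_le one_pos ht1
  have hta : 1/t < ε₀ := by
    have h1 : 2/ε₀ ≤ t := le_trans (le_max_left _ _) htT
    have h2 : 1/t ≤ 1/(2/ε₀) := one_div_le_one_div_of_le (by positivity) h1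
    rw [one_div_div] at h2
    linarith
  have hfun : (fun r => Real.exp (-r ^ 2) * Real.cos (2 * t * f r) * (1 + δ * r ^ (2 * θ))
      / (μ * r ^ 3 + κ * r)) = fun r => g δ θ μ κ r * Real.cos (2*t*ff δ θ μ κ r) := by
    funext r
    rw [hf r]
    unfold g ff F P Q D
    ring
  have hset : ∫ r in Set.Icc (1 / t) ε₀,
      Real.exp (-r ^ 2) * Real.cos (2 * t * f r) * (1 + δ * r ^ (2 * θ)) / (μ * r ^ 3 + κ * r)
      = ∫ x in (1/t)..ε₀, g δ θ μ κ x * Real.cos (2*t*ff δ θ μ κ x) := by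
    rw [MeasureTheory.integral_Icc_eq_integral_Ioc,
      ← intervalIntegral.integral_of_le hta.le, hfun]
  rw [hset]
  exact hCt t ht1 hta
end

section
/- Let n = 2, u₀ ∈ L²(ℝ²), u₁ ∈ L^{1,γ}(ℝ²) with γ ∈ (0,1], and P = ∫_{ℝ²} u₁ dx ≠ 0. Then the solution of the generalized Rosenau equation satisfies ‖u(t,·)‖²_{L²(ℝ²)} ≥ C P² log t for t sufficiently large, with some C > 0. -/
open MeasureTheory RealInnerProductSpace Real

lemma aux_harm (K : ℕ) : Real.log (K + 1) ≤ ∑ k ∈ Finset.range K, (1:ℝ)/(k+1) := by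
  have htel : ∑ k ∈ Finset.range K, (Real.log ((k:ℝ)+2) - Real.log ((k:ℝ)+1))
      = Real.log ((K:ℝ)+1) := by
    have h := Finset.sum_range_sub (fun i : ℕ => Real.log ((i:ℝ)+1)) K
    calc ∑ k ∈ Finset.range K, (Real.log ((k:ℝ)+2) - Real.log ((k:ℝ)+1))
        = ∑ k ∈ Finset.range K, (Real.log (((k+1:ℕ):ℝ)+1) - Real.log ((k:ℝ)+1)) := by
          apply Finset.sum_congr rfl; intro k _; push_cast; ring_nf
      _ = Real.log ((K:ℝ)+1) - Real.log (((0:ℕ):ℝ)+1) := h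
      _ = Real.log ((K:ℝ)+1) := by norm_num
  rw [← htel]
  apply Finset.sum_le_sum
  intro k _
  have hk1 : (0:ℝ) < (k:ℝ)+1 := by positivity
  have hk2 : (0:ℝ) < (k:ℝ)+2 := by positivity
  have h1 : Real.log ((k:ℝ)+2) - Real.log ((k:ℝ)+1) = Real.log (((k:ℝ)+2)/((k:ℝ)+1)) := by
    rw [Real.log_div hk2.ne' hk1.ne']
  rw [h1]
  have h2 := Real.log_le_sub_one_of_pos (x := ((k:ℝ)+2)/((k:ℝ)+1)) (by positivity)
  have h3 : ((k:ℝ)+2)/((k:ℝ)+1) - 1 = 1/((k:ℝ)+1) := by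
    rw [div_sub_one hk1.ne']; ring_nf
  linarith [h2, h3.symm.le]

lemma aux_sin (k : ℕ) (x : ℝ) (h1 : k * π + π/4 ≤ x) (h2 : x ≤ k * π + 3*π/4) :
    1/2 ≤ |Real.sin x| := by
  have hx : Real.sin (x - k*π + (k:ℤ)*π) = (-1)^(k:ℤ) * Real.sin (x - k*π) :=
    Real.sin_add_int_mul_pi _ _
  have habs : |Real.sin x| = |Real.sin (x - k*π)| := by
    have : x - k*π + (k:ℤ)*π = x := by push_cast; ring
    rw [this] at hx
    rw [hx, abs_mul]
    simp [abs_of_nonneg]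
  rw [habs]
  set y := x - k*π with hy
  have hy1 : π/4 ≤ y := by simp only [hy]; linarith
  have hy2 : y ≤ 3*π/4 := by simp only [hy]; linarith
  have hsin : Real.sin y = Real.cos (π/2 - y) := (Real.cos_pi_div_two_sub y).symm
  have hcos : Real.cos (π/4) ≤ Real.cos (π/2 - y) := by
    rw [← Real.cos_abs (π/2 - y)]
    apply Real.cos_le_cos_of_nonneg_of_le_pi (abs_nonneg _)
    · linarith [Real.pi_pos]
    · rw [abs_le]; constructor <;> linarith
  have : (1:ℝ)/2 ≤ Real.sin y := by
    rw [hsin]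
    refine le_trans ?_ hcos
    rw [Real.cos_pi_div_four]
    nlinarith [Real.sq_sqrt (by norm_num : (2:ℝ) ≥ 0), Real.sqrt_nonneg 2]
  calc (1:ℝ)/2 ≤ Real.sin y := this
    _ ≤ |Real.sin y| := le_abs_self _

lemma aux_exp1 (s : ℝ) : ‖Complex.exp (-(Complex.I * s)) - 1‖ ≤ 2 * min 1 |s| := by
  have habs : ‖-(Complex.I * s)‖ = |s| := by
    simp [Complex.norm_real]
  rcases le_total |s| 1 with h | h
  · have h2 : ‖-(Complex.I * s)‖ ≤ 1 := by rw [habs]; exact h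
    have := Complex.norm_exp_sub_one_le h2
    rw [habs] at this
    rwa [min_eq_right h]
  · rw [min_eq_left h]
    have h3 : ‖Complex.exp (-(Complex.I * s))‖ = 1 := by
      have : -(Complex.I * (s:ℂ)) = ((-s : ℝ) : ℂ) * Complex.I := by push_cast; ring
      rw [this, Complex.norm_exp_ofReal_mul_I]
    calc ‖Complex.exp (-(Complex.I * s)) - 1‖
        ≤ ‖Complex.exp (-(Complex.I * s))‖ + ‖(1:ℂ)‖ :=
          (norm_sub_le _ _)
      _ = 2 * 1 := by rw [h3, norm_one]; norm_num

lemma aux_min_rpow (γ s : ℝ) (hγ : 0 < γ) (hγ1 : γ ≤ 1) (hs : 0 ≤ s) :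
    min 1 s ≤ s ^ γ := by
  rcases le_total s 1 with h | h
  · rw [min_eq_right h]
    calc s = s ^ (1:ℝ) := (Real.rpow_one s).symm
      _ ≤ s ^ γ := by
        rcases eq_or_lt_of_le hs with h0 | h0
        · rw [← h0]
          rw [Real.zero_rpow (by norm_num), Real.zero_rpow hγ.ne']
        · exact Real.rpow_le_rpow_of_exponent_ge h0 h hγ1
  · rw [min_eq_left h]
    calc (1:ℝ) = s ^ (0:ℝ) := (Real.rpow_zero s).symm
      _ ≤ s ^ γ := Real.rpow_le_rpow_of_exponent_le h hγ.le

section Faux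
variable {δ θ μ κ : ℝ} {f : ℝ → ℝ}

lemma aux_f_zero (hδ : 0 < δ) (hθ : 0 < θ)
    (hf : ∀ r : ℝ, f r = Real.sqrt ((μ * r ^ 4 + κ * r ^ 2) / (1 + δ * r ^ (2 * θ)))) :
    f 0 = 0 := by
  rw [hf 0, Real.zero_rpow (by positivity)]
  norm_num

lemma aux_f_lower (hδ : 0 < δ) (hθ : 0 < θ) (hμ : 0 ≤ μ) (hκ : 0 < κ)
    (hf : ∀ r : ℝ, f r = Real.sqrt ((μ * r ^ 4 + κ * r ^ 2) / (1 + δ * r ^ (2 * θ))))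
    (r : ℝ) (hr : 0 ≤ r) (hr1 : r ≤ 1) :
    Real.sqrt (κ / (1 + δ)) * r ≤ f r := by
  rw [hf r]
  have hrp : r ^ (2*θ) ≤ 1 := Real.rpow_le_one hr hr1 (by positivity)
  have h1 : (κ / (1 + δ)) * r ^ 2 ≤ (μ * r ^ 4 + κ * r ^ 2) / (1 + δ * r ^ (2 * θ)) := by
    rw [div_mul_eq_mul_div]
    have h4 : 0 ≤ μ * r ^ 4 := by positivity
    apply div_le_div₀ (by positivity) (by nlinarith) (by positivity) (by nlinarith)
  calc Real.sqrt (κ / (1 + δ)) * r = Real.sqrt ((κ / (1 + δ)) * r ^ 2) := by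
        rw [Real.sqrt_mul (by positivity), Real.sqrt_sq hr]
    _ ≤ _ := Real.sqrt_le_sqrt h1

lemma aux_f_upper (hδ : 0 < δ) (hθ : 0 < θ) (hμ : 0 ≤ μ) (hκ : 0 < κ)
    (hf : ∀ r : ℝ, f r = Real.sqrt ((μ * r ^ 4 + κ * r ^ 2) / (1 + δ * r ^ (2 * θ))))
    (r : ℝ) (hr : 0 ≤ r) (hr1 : r ≤ 1) :
    f r ≤ Real.sqrt (μ + κ + 1) * r := by
  rw [hf r]
  have hrp : 0 ≤ r ^ (2*θ) := Real.rpow_nonneg hr _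
  have h1 : (μ * r ^ 4 + κ * r ^ 2) / (1 + δ * r ^ (2 * θ)) ≤ (μ + κ + 1) * r ^ 2 := by
    calc (μ * r ^ 4 + κ * r ^ 2) / (1 + δ * r ^ (2 * θ)) ≤ (μ * r ^ 4 + κ * r ^ 2) / 1 := by
          apply div_le_div_of_nonneg_left (by positivity) one_pos (by nlinarith)
      _ = μ * r ^ 4 + κ * r ^ 2 := by norm_num
      _ ≤ (μ + κ + 1) * r ^ 2 := by nlinarith [pow_le_pow_of_le_one hr hr1 (by norm_num : 2 ≤ 4), mul_le_mul_of_nonneg_left (pow_le_pow_of_le_one hr hr1 (by norm_num : 2 ≤ 4)) hμ]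
  calc Real.sqrt ((μ * r ^ 4 + κ * r ^ 2) / (1 + δ * r ^ (2 * θ)))
      ≤ Real.sqrt ((μ + κ + 1) * r ^ 2) := Real.sqrt_le_sqrt h1
    _ = Real.sqrt (μ + κ + 1) * r := by
        rw [Real.sqrt_mul (by positivity), Real.sqrt_sq hr]

lemma aux_f_cont (hδ : 0 < δ) (hθ : 0 < θ) (hμ : 0 ≤ μ) (hκ : 0 < κ)
    (hf : ∀ r : ℝ, f r = Real.sqrt ((μ * r ^ 4 + κ * r ^ 2) / (1 + δ * r ^ (2 * θ)))) :
    ContinuousOn f (Set.Icc 0 1) := by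
  have hfe : f = fun r => Real.sqrt ((μ * r ^ 4 + κ * r ^ 2) / (1 + δ * r ^ (2 * θ))) :=
    funext hf
  rw [hfe]
  apply Real.continuous_sqrt.comp_continuousOn
  apply ContinuousOn.div
  · exact (by continuity : Continuous fun r : ℝ => μ * r ^ 4 + κ * r ^ 2).continuousOn
  · exact (continuous_const.add (continuous_const.mul
      (Real.continuous_rpow_const (by positivity)))).continuousOn
  · intro x hx
    have : 0 ≤ x ^ (2*θ) := Real.rpow_nonneg hx.1 _
    positivity

set_option maxHeartbeats 1000000 in
lemma aux_f_lip (hδ : 0 < δ) (hθ : 0 < θ) (hμ : 0 ≤ μ) (hκ : 0 < κ)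
    (hf : ∀ r : ℝ, f r = Real.sqrt ((μ * r ^ 4 + κ * r ^ 2) / (1 + δ * r ^ (2 * θ))))
    (r r' : ℝ) (hr : 0 ≤ r) (hrr : r ≤ r') (hr1 : r' ≤ 1) :
    f r' - f r ≤ ((4*μ+2*κ) / Real.sqrt (κ / (1 + δ))) * (r' - r) := by
  set a := Real.sqrt (κ / (1 + δ)) with ha
  have ha0 : 0 < a := Real.sqrt_pos.mpr (by positivity)
  by_cases hc : f r' ≤ f r
  · have : 0 ≤ ((4*μ+2*κ)/a) * (r' - r) := by
      apply mul_nonneg (by positivity) (by linarith)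
    linarith
  push_neg at hc
  have hr'0 : 0 < r' := by
    rcases eq_or_lt_of_le (hr.trans hrr) with h0 | h0
    · exfalso; have h1 : r = 0 := by linarith
      rw [h1, ← h0] at hc; exact lt_irrefl _ hc
    · exact h0
  have hrpm : r ^ (2*θ) ≤ r' ^ (2*θ) := Real.rpow_le_rpow hr hrr (by positivity)
  have hd : (1:ℝ) ≤ 1 + δ * r ^ (2*θ) := by
    have : 0 ≤ r ^ (2*θ) := Real.rpow_nonneg hr _
    nlinarith
  have hd' : 1 + δ * r ^ (2*θ) ≤ 1 + δ * r' ^ (2*θ) := by nlinarith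
  have hnum : 0 ≤ μ * r' ^ 4 + κ * r' ^ 2 := by positivity
  have hg : (μ * r' ^ 4 + κ * r' ^ 2) / (1 + δ * r' ^ (2 * θ))
      - (μ * r ^ 4 + κ * r ^ 2) / (1 + δ * r ^ (2 * θ)) ≤ (4*μ+2*κ) * r' * (r' - r) := by
    have h1 : (μ * r' ^ 4 + κ * r' ^ 2) / (1 + δ * r' ^ (2 * θ))
        ≤ (μ * r' ^ 4 + κ * r' ^ 2) / (1 + δ * r ^ (2 * θ)) :=
      div_le_div_of_nonneg_left hnum (by linarith) hd'
    have h2 : (μ * r' ^ 4 + κ * r' ^ 2) / (1 + δ * r ^ (2 * θ))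
        - (μ * r ^ 4 + κ * r ^ 2) / (1 + δ * r ^ (2 * θ))
        = ((μ * r' ^ 4 + κ * r' ^ 2) - (μ * r ^ 4 + κ * r ^ 2)) / (1 + δ * r ^ (2 * θ)) := by
      ring
    have h3 : ((μ * r' ^ 4 + κ * r' ^ 2) - (μ * r ^ 4 + κ * r ^ 2)) / (1 + δ * r ^ (2 * θ))
        ≤ (μ * r' ^ 4 + κ * r' ^ 2) - (μ * r ^ 4 + κ * r ^ 2) := by
      have hp4 : r ^ 4 ≤ r' ^ 4 := pow_le_pow_left₀ hr hrr 4
      have hp2 : r ^ 2 ≤ r' ^ 2 := pow_le_pow_left₀ hr hrr 2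
      apply div_le_self (by nlinarith) hd
    have h4 : (μ * r' ^ 4 + κ * r' ^ 2) - (μ * r ^ 4 + κ * r ^ 2)
        ≤ (4*μ+2*κ) * r' * (r' - r) := by
      have e2 : r' ^ 2 - r ^ 2 ≤ 2 * r' * (r' - r) := by nlinarith
      have e4 : r' ^ 4 - r ^ 4 ≤ 4 * r' * (r' - r) := by
        have hb : r' ^ 2 + r ^ 2 ≤ 2 := by nlinarith
        have hbn : 0 ≤ r' ^ 2 + r ^ 2 := by positivity
        have e4' : r' ^ 4 - r ^ 4 = (r' ^ 2 - r ^ 2) * (r' ^ 2 + r ^ 2) := by ring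
        have e2n : 0 ≤ r' ^ 2 - r ^ 2 := by nlinarith
        have hm : 0 ≤ r' * (r' - r) := mul_nonneg (by linarith) (by linarith)
        calc r' ^ 4 - r ^ 4 = (r' ^ 2 - r ^ 2) * (r' ^ 2 + r ^ 2) := e4'
          _ ≤ (2 * r' * (r' - r)) * 2 := by nlinarith
          _ = 4 * r' * (r' - r) := by ring
      have A := mul_le_mul_of_nonneg_left e4 hμ
      have B := mul_le_mul_of_nonneg_left e2 hκ.le
      calc μ * r' ^ 4 + κ * r' ^ 2 - (μ * r ^ 4 + κ * r ^ 2)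
          = μ * (r' ^ 4 - r ^ 4) + κ * (r' ^ 2 - r ^ 2) := by ring
        _ ≤ μ * (4 * r' * (r' - r)) + κ * (2 * r' * (r' - r)) := add_le_add A B
        _ = (4*μ+2*κ) * r' * (r' - r) := by ring
    linarith
  have hgnn : 0 ≤ (μ * r ^ 4 + κ * r ^ 2) / (1 + δ * r ^ (2 * θ)) := by
    apply div_nonneg (by positivity) (by linarith)
  have hgnn' : 0 ≤ (μ * r' ^ 4 + κ * r' ^ 2) / (1 + δ * r' ^ (2 * θ)) := by
    apply div_nonneg (by positivity) (by linarith)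
  have hsq : (f r' - f r) * (f r' + f r)
      = (μ * r' ^ 4 + κ * r' ^ 2) / (1 + δ * r' ^ (2 * θ))
      - (μ * r ^ 4 + κ * r ^ 2) / (1 + δ * r ^ (2 * θ)) := by
    have e1 : f r' ^ 2 = (μ * r' ^ 4 + κ * r' ^ 2) / (1 + δ * r' ^ (2 * θ)) := by
      rw [hf r']; exact Real.sq_sqrt hgnn'
    have e2 : f r ^ 2 = (μ * r ^ 4 + κ * r ^ 2) / (1 + δ * r ^ (2 * θ)) := by
      rw [hf r]; exact Real.sq_sqrt hgnn
    nlinarith [e1, e2]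
  have hfl : a * r' ≤ f r' := aux_f_lower hδ hθ hμ hκ hf r' (by linarith) hr1
  have hfr0 : 0 ≤ f r := by rw [hf r]; exact Real.sqrt_nonneg _
  have hsum : 0 < f r' + f r := by nlinarith
  have hsum' : a * r' ≤ f r' + f r := by linarith
  -- f r' - f r = (g' - g)/(f r' + f r) ≤ ((4μ+2κ) r' (r'-r))/(a r')
  have step1 : f r' - f r ≤ ((4*μ+2*κ) * r' * (r' - r)) / (a * r') := by
    rw [le_div_iff₀ (by positivity)]
    have key : (f r' - f r) * (a * r') ≤ (4*μ+2*κ) * r' * (r' - r) := by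
      calc (f r' - f r) * (a * r') ≤ (f r' - f r) * (f r' + f r) := by
            apply mul_le_mul_of_nonneg_left hsum' (by linarith)
        _ ≤ (4*μ+2*κ) * r' * (r' - r) := by rw [hsq]; exact hg
    exact key
  calc f r' - f r ≤ ((4*μ+2*κ) * r' * (r' - r)) / (a * r') := step1
    _ = ((4*μ+2*κ)/a) * (r' - r) := by
      field_simp
end Faux

lemma aux_hit (f : ℝ → ℝ) (ε α β : ℝ) (hε : 0 < ε)
    (hcont : ContinuousOn f (Set.Icc 0 ε)) (hf0 : f 0 = 0)
    (hα : 0 < α) (hαβ : α < β) (hβ : β ≤ f ε) :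
    ∃ r r', 0 < r ∧ r < r' ∧ r' ≤ ε ∧ f r = α ∧ f r' = β ∧
      ∀ s, r ≤ s → s ≤ r' → α ≤ f s ∧ f s ≤ β := by
  have hIcc : Set.Icc (f 0) (f ε) ⊆ f '' Set.Icc 0 ε := intermediate_value_Icc hε.le hcont
  set Sβ : Set ℝ := Set.Icc 0 ε ∩ f ⁻¹' {β} with hSβdef
  have hSβc : IsClosed Sβ := hcont.preimage_isClosed_of_isClosed isClosed_Icc isClosed_singleton
  have hSβne : Sβ.Nonempty := by
    obtain ⟨x, hx, hfx⟩ := hIcc (show β ∈ Set.Icc (f 0) (f ε) from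
      ⟨by rw [hf0]; exact (hα.trans hαβ).le, hβ⟩)
    exact ⟨x, hx, by simpa using hfx⟩
  have hSβbdd : BddBelow Sβ := BddBelow.mono Set.inter_subset_left bddBelow_Icc
  set r' : ℝ := sInf Sβ with hr'def
  have hr'mem : r' ∈ Sβ := hSβc.csInf_mem hSβne hSβbdd
  have hr'Icc : r' ∈ Set.Icc 0 ε := hr'mem.1
  have hfr' : f r' = β := by have := hr'mem.2; simpa using this
  have hr'0 : 0 ≤ r' := hr'Icc.1
  have hr'ε : r' ≤ ε := hr'Icc.2
  have hcont' : ContinuousOn f (Set.Icc 0 r') :=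
    hcont.mono (Set.Icc_subset_Icc_right hr'ε)
  set Sα : Set ℝ := Set.Icc 0 r' ∩ f ⁻¹' {α} with hSαdef
  have hSαc : IsClosed Sα := hcont'.preimage_isClosed_of_isClosed isClosed_Icc isClosed_singleton
  have hSαne : Sα.Nonempty := by
    have hIcc' : Set.Icc (f 0) (f r') ⊆ f '' Set.Icc 0 r' :=
      intermediate_value_Icc hr'0 hcont'
    obtain ⟨x, hx, hfx⟩ := hIcc' (show α ∈ Set.Icc (f 0) (f r') from
      ⟨by rw [hf0]; exact hα.le, by rw [hfr']; exact hαβ.le⟩)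
    exact ⟨x, hx, by simpa using hfx⟩
  have hSαbdd : BddAbove Sα := BddAbove.mono Set.inter_subset_left bddAbove_Icc
  set r : ℝ := sSup Sα with hrdef
  have hrmem : r ∈ Sα := hSαc.csSup_mem hSαne hSαbdd
  have hfr : f r = α := by have := hrmem.2; simpa using this
  have hr0 : 0 ≤ r := hrmem.1.1
  have hrr' : r ≤ r' := hrmem.1.2
  have hrpos : 0 < r := by
    rcases eq_or_lt_of_le hr0 with h0 | h0
    · exfalso; rw [← h0, hf0] at hfr; exact hα.ne hfr
    · exact h0
  have hrltr' : r < r' := by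
    rcases eq_or_lt_of_le hrr' with h0 | h0
    · exfalso; rw [h0, hfr'] at hfr; exact hαβ.ne hfr.symm
    · exact h0
  refine ⟨r, r', hrpos, hrltr', hr'ε, hfr, hfr', ?_⟩
  intro s hs1 hs2
  have hs0 : 0 ≤ s := hr0.trans hs1
  have hsε : s ≤ ε := hs2.trans hr'ε
  constructor
  · by_contra hlt
    push_neg at hlt
    have hsr : r < s := by
      rcases eq_or_lt_of_le hs1 with h0 | h0
      · exfalso; rw [← h0] at hlt; rw [hfr] at hlt; exact lt_irrefl _ hlt
      · exact h0
    have hcont2 : ContinuousOn f (Set.Icc s r') :=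
      hcont.mono (Set.Icc_subset_Icc hs0 hr'ε)
    have hIcc2 : Set.Icc (f s) (f r') ⊆ f '' Set.Icc s r' :=
      intermediate_value_Icc hs2 hcont2
    obtain ⟨x, hx, hfx⟩ := hIcc2 (show α ∈ Set.Icc (f s) (f r') from
      ⟨hlt.le, by rw [hfr']; exact hαβ.le⟩)
    have hxSα : x ∈ Sα := ⟨⟨hs0.trans hx.1, hx.2⟩, by simpa using hfx⟩
    have := le_csSup hSαbdd hxSα
    have : s ≤ x := hx.1
    linarith [le_csSup hSαbdd hxSα]
  · by_contra hlt
    push_neg at hlt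
    have hsr' : s < r' := by
      rcases eq_or_lt_of_le hs2 with h0 | h0
      · exfalso; rw [h0, hfr'] at hlt; exact lt_irrefl _ hlt
      · exact h0
    have hcont2 : ContinuousOn f (Set.Icc r s) :=
      hcont.mono (Set.Icc_subset_Icc hr0 hsε)
    have hIcc2 : Set.Icc (f r) (f s) ⊆ f '' Set.Icc r s :=
      intermediate_value_Icc hs1 hcont2
    obtain ⟨x, hx, hfx⟩ := hIcc2 (show β ∈ Set.Icc (f r) (f s) from
      ⟨by rw [hfr]; exact hαβ.le, hlt.le⟩)
    have hxSβ : x ∈ Sβ := ⟨⟨hr0.trans hx.1, (hx.2.trans hs2).trans hr'ε⟩, by simpa using hfx⟩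
    have h1 := csInf_le hSβbdd hxSβ
    linarith [hx.2]

section Eaux
local notation "E2" => EuclideanSpace ℝ (Fin 2)

lemma aux_ker_cont (ξ : E2) :
    Continuous fun x : E2 => Complex.exp (-(Complex.I * ((⟪x, ξ⟫ : ℝ) : ℂ))) := by
  apply Complex.continuous_exp.comp
  exact (continuous_const.mul (Complex.continuous_ofReal.comp
    (continuous_id.inner continuous_const))).neg

lemma aux_ker_norm (ξ x : E2) : ‖Complex.exp (-(Complex.I * ((⟪x, ξ⟫ : ℝ) : ℂ)))‖ = 1 := by
  have h : -(Complex.I * ((⟪x, ξ⟫ : ℝ) : ℂ)) = ((-(⟪x, ξ⟫ : ℝ) : ℝ) : ℂ) * Complex.I := by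
    push_cast; ring
  rw [h, Complex.norm_exp_ofReal_mul_I]

lemma aux_int_exp_mul (u : E2 → ℝ) (hu : Integrable u volume) (ξ : E2) :
    Integrable (fun x => Complex.exp (-(Complex.I * ((⟪x, ξ⟫ : ℝ) : ℂ))) * (u x : ℂ)) volume :=
  Integrable.bdd_mul hu.ofReal (aux_ker_cont ξ).aestronglyMeasurable
    (ae_of_all _ (fun x => le_of_eq (aux_ker_norm ξ x)))

lemma aux_I0_bound (u : E2 → ℝ) (ξ : E2) :
    ‖∫ x, Complex.exp (-(Complex.I * ((⟪x, ξ⟫ : ℝ) : ℂ))) * (u x : ℂ)‖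
      ≤ ∫ x, |u x| := by
  refine le_trans (norm_integral_le_integral_norm _) (le_of_eq ?_)
  congr 1
  funext x
  rw [norm_mul, aux_ker_norm, one_mul, Complex.norm_real, Real.norm_eq_abs]

lemma aux_I1_bound (γ : ℝ) (hγ : 0 < γ) (hγ1 : γ ≤ 1) (u : E2 → ℝ)
    (hu : Integrable u volume)
    (huw : Integrable (fun x => (1 + ‖x‖ ^ γ) * |u x|) volume) (ξ : E2) :
    ‖(∫ x, Complex.exp (-(Complex.I * ((⟪x, ξ⟫ : ℝ) : ℂ))) * (u x : ℂ))
        - (((∫ x, u x) : ℝ) : ℂ)‖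
      ≤ 2 * ‖ξ‖ ^ γ * ∫ x, (1 + ‖x‖ ^ γ) * |u x| := by
  have h1 : (((∫ x, u x) : ℝ) : ℂ) = ∫ x, (u x : ℂ) := integral_ofReal.symm
  have hof : Integrable (fun x : E2 => ((u x : ℝ) : ℂ)) volume := hu.ofReal
  have h2 : (∫ x, Complex.exp (-(Complex.I * ((⟪x, ξ⟫ : ℝ) : ℂ))) * (u x : ℂ))
      - ∫ x, (u x : ℂ)
      = ∫ x, (Complex.exp (-(Complex.I * ((⟪x, ξ⟫ : ℝ) : ℂ))) * (u x : ℂ) - (u x : ℂ)) :=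
    (integral_sub (aux_int_exp_mul u hu ξ) hof).symm
  rw [h1, h2]
  refine le_trans (norm_integral_le_integral_norm _) ?_
  have key : ∀ x : E2, ‖Complex.exp (-(Complex.I * ((⟪x, ξ⟫ : ℝ) : ℂ))) * (u x : ℂ) - (u x : ℂ)‖
      ≤ 2 * ‖ξ‖ ^ γ * ((1 + ‖x‖ ^ γ) * |u x|) := by
    intro x
    have e1 : Complex.exp (-(Complex.I * ((⟪x, ξ⟫ : ℝ) : ℂ))) * (u x : ℂ) - (u x : ℂ)
        = (Complex.exp (-(Complex.I * ((⟪x, ξ⟫ : ℝ) : ℂ))) - 1) * (u x : ℂ) := by ring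
    rw [e1, norm_mul, Complex.norm_real, Real.norm_eq_abs]
    have e2 : ‖Complex.exp (-(Complex.I * ((⟪x, ξ⟫ : ℝ) : ℂ))) - 1‖ ≤ 2 * ‖ξ‖ ^ γ * (1 + ‖x‖ ^ γ) := by
      refine le_trans (aux_exp1 (⟪x, ξ⟫ : ℝ)) ?_
      have e3 : min 1 |(⟪x, ξ⟫ : ℝ)| ≤ |(⟪x, ξ⟫ : ℝ)| ^ γ :=
        aux_min_rpow γ _ hγ hγ1 (abs_nonneg _)
      have e4 : |(⟪x, ξ⟫ : ℝ)| ^ γ ≤ (‖x‖ * ‖ξ‖) ^ γ :=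
        Real.rpow_le_rpow (abs_nonneg _) (abs_real_inner_le_norm x ξ) hγ.le
      have e5 : (‖x‖ * ‖ξ‖) ^ γ = ‖x‖ ^ γ * ‖ξ‖ ^ γ :=
        Real.mul_rpow (norm_nonneg _) (norm_nonneg _)
      have e6 : ‖x‖ ^ γ * ‖ξ‖ ^ γ ≤ ‖ξ‖ ^ γ * (1 + ‖x‖ ^ γ) := by
        have h7 : (0:ℝ) ≤ ‖x‖ ^ γ := Real.rpow_nonneg (norm_nonneg _) _
        have h8 : (0:ℝ) ≤ ‖ξ‖ ^ γ := Real.rpow_nonneg (norm_nonneg _) _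
        nlinarith
      nlinarith [e3, e4, e5.le, e6]
    have hun : (0:ℝ) ≤ |u x| := abs_nonneg _
    calc ‖Complex.exp (-(Complex.I * ((⟪x, ξ⟫ : ℝ) : ℂ))) - 1‖ * |u x|
        ≤ (2 * ‖ξ‖ ^ γ * (1 + ‖x‖ ^ γ)) * |u x| := mul_le_mul_of_nonneg_right e2 hun
      _ = 2 * ‖ξ‖ ^ γ * ((1 + ‖x‖ ^ γ) * |u x|) := by ring
  refine le_trans (integral_mono ((aux_int_exp_mul u hu ξ).sub hof).norm
    (huw.const_mul _) key) (le_of_eq ?_)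
  exact integral_const_mul _ _
end Eaux

set_option maxHeartbeats 2000000 in
theorem stmt14 (δ θ μ κ γ : ℝ) (hδ : 0 < δ) (hθ : 0 < θ) (hθ2 : θ ≤ 2)
    (hμ : 0 ≤ μ) (hκ : 0 < κ) (hγ : 0 < γ) (hγ1 : γ ≤ 1)
    (u₀ u₁ : EuclideanSpace ℝ (Fin 2) → ℝ) (hu₀ : MemLp u₀ 2 volume)
    (hu₁ : Integrable (fun x => (1 + ‖x‖ ^ γ) * |u₁ x|))
    (P : ℝ) (hP : P = ∫ x, u₁ x) (hP0 : P ≠ 0)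
    (f : ℝ → ℝ)
    (hf : ∀ r : ℝ, f r = Real.sqrt ((μ * r ^ 4 + κ * r ^ 2) / (1 + δ * r ^ (2 * θ))))
    (w : ℝ → EuclideanSpace ℝ (Fin 2) → ℂ)
    (hw : ∀ (t : ℝ) (ξ : EuclideanSpace ℝ (Fin 2)), w t ξ =
        (Real.cos (t * f ‖ξ‖) : ℂ)
          * (∫ x, Complex.exp (-(Complex.I * (⟪x, ξ⟫ : ℝ))) * (u₀ x : ℂ))
      + ((Real.sin (t * f ‖ξ‖) / f ‖ξ‖ : ℝ) : ℂ)
          * (∫ x, Complex.exp (-(Complex.I * (⟪x, ξ⟫ : ℝ))) * (u₁ x : ℂ))) :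
    ∃ C : ℝ, 0 < C ∧ ∃ T : ℝ, ∀ t ≥ T,
      ENNReal.ofReal (C * P ^ 2 * Real.log t)
        ≤ ∫⁻ ξ : EuclideanSpace ℝ (Fin 2), ENNReal.ofReal (‖w t ξ‖ ^ 2) := by
  have hπ := Real.pi_pos
  have hu₁i : Integrable u₁ volume := by
    by_contra h
    exact hP0 (hP.trans (integral_undef h))
  set M : ℝ := ∫ x, (1 + ‖x‖ ^ γ) * |u₁ x| with hM
  have hPpos : 0 < |P| := abs_pos.mpr hP0
  have hMP : |P| ≤ M := by
    have h1 : |∫ x, u₁ x| ≤ ∫ x, |u₁ x| := by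
      simpa [Real.norm_eq_abs] using
        norm_integral_le_integral_norm (μ := volume) u₁
    have h2 : ∫ x, |u₁ x| ≤ M := by
      apply integral_mono hu₁i.abs hu₁
      intro x
      show |u₁ x| ≤ (1 + ‖x‖ ^ γ) * |u₁ x|
      have h3 : (0:ℝ) ≤ ‖x‖ ^ γ := Real.rpow_nonneg (norm_nonneg _) _
      have h4 : (0:ℝ) ≤ |u₁ x| := abs_nonneg _
      calc |u₁ x| = 1 * |u₁ x| := (one_mul _).symm
        _ ≤ (1 + ‖x‖ ^ γ) * |u₁ x| := mul_le_mul_of_nonneg_right (by linarith) h4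
    rw [hP]; linarith
  have hM0 : 0 < M := lt_of_lt_of_le hPpos hMP
  set K₀ : ℝ := ∫ x, |u₀ x| with hK₀
  have hK₀0 : 0 ≤ K₀ := integral_nonneg (fun x => abs_nonneg _)
  set a : ℝ := Real.sqrt (κ / (1 + δ)) with ha
  set b : ℝ := Real.sqrt (μ + κ + 1) with hb
  have ha0 : 0 < a := Real.sqrt_pos.mpr (by positivity)
  have hb0 : 0 < b := Real.sqrt_pos.mpr (by positivity)
  obtain ⟨Λ, hΛ⟩ : ∃ L : ℝ, L = (4*μ+2*κ) / a := ⟨_, rfl⟩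
  have hΛ0 : 0 < Λ := hΛ ▸ div_pos (by linarith) ha0
  set ε : ℝ := min 1 (min ((|P| / (8*M)) ^ (γ⁻¹)) (|P| / (8*b*(K₀+1)))) with hε
  have hε0 : 0 < ε := by
    apply lt_min one_pos
    apply lt_min
    · positivity
    · positivity
  have hε1 : ε ≤ 1 := min_le_left _ _
  have hεγ : 2 * ε ^ γ * M ≤ |P| / 4 := by
    have h1 : ε ≤ (|P| / (8*M)) ^ (γ⁻¹) := le_trans (min_le_right _ _) (min_le_left _ _)
    have h2 : ε ^ γ ≤ ((|P| / (8*M)) ^ (γ⁻¹)) ^ γ := Real.rpow_le_rpow hε0.le h1 hγ.le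
    have h3 : ((|P| / (8*M)) ^ (γ⁻¹)) ^ γ = |P| / (8*M) := by
      rw [← Real.rpow_mul (by positivity), inv_mul_cancel₀ hγ.ne', Real.rpow_one]
    rw [h3] at h2
    calc 2 * ε^γ * M ≤ 2 * (|P|/(8*M)) * M := by
          have := mul_le_mul_of_nonneg_right
            (mul_le_mul_of_nonneg_left h2 (by norm_num : (0:ℝ) ≤ 2)) hM0.le
          linarith
      _ = |P|/4 := by field_simp; ring
  have hεK₀ : K₀ + 1 ≤ |P| / (8*b*ε) := by
    have h1 : ε ≤ |P| / (8*b*(K₀+1)) := le_trans (min_le_right _ _) (min_le_right _ _)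
    have h1' : ε * (8*b*(K₀+1)) ≤ |P| := (le_div_iff₀ (by positivity)).mp h1
    rw [le_div_iff₀ (by positivity)]
    calc (K₀+1) * (8*b*ε) = ε * (8*b*(K₀+1)) := by ring
      _ ≤ |P| := h1'
  -- f facts
  have hfl : ∀ r : ℝ, 0 ≤ r → r ≤ 1 → a * r ≤ f r :=
    fun r hr hr1 => aux_f_lower hδ hθ hμ hκ hf r hr hr1
  have hfu : ∀ r : ℝ, 0 ≤ r → r ≤ 1 → f r ≤ b * r :=
    fun r hr hr1 => aux_f_upper hδ hθ hμ hκ hf r hr hr1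
  have hf0 : f 0 = 0 := aux_f_zero hδ hθ hf
  have hfcont : ContinuousOn f (Set.Icc 0 ε) :=
    (aux_f_cont hδ hθ hμ hκ hf).mono (Set.Icc_subset_Icc_right hε1)
  have hflip : ∀ r r' : ℝ, 0 ≤ r → r ≤ r' → r' ≤ 1 → f r' - f r ≤ Λ * (r' - r) :=
    fun r r' hr hrr hr1 => hΛ ▸ aux_f_lip hδ hθ hμ hκ hf r r' hr hrr hr1
  -- bounds on the Fourier-type integrals
  have hI₀ : ∀ ξ : EuclideanSpace ℝ (Fin 2),
      ‖∫ x, Complex.exp (-(Complex.I * ((⟪x, ξ⟫ : ℝ) : ℂ))) * (u₀ x : ℂ)‖ ≤ K₀ :=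
    fun ξ => aux_I0_bound u₀ ξ
  have hI₁ : ∀ ξ : EuclideanSpace ℝ (Fin 2), ‖ξ‖ ≤ ε →
      |P|/2 ≤ ‖∫ x, Complex.exp (-(Complex.I * ((⟪x, ξ⟫ : ℝ) : ℂ))) * (u₁ x : ℂ)‖ := by
    intro ξ hξ
    have h1 := aux_I1_bound γ hγ hγ1 u₁ hu₁i hu₁ ξ
    rw [← hP] at h1
    have h2 : 2 * ‖ξ‖^γ * M ≤ |P|/4 := by
      have h2' : ‖ξ‖^γ ≤ ε^γ := Real.rpow_le_rpow (norm_nonneg _) hξ hγ.le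
      have := mul_le_mul_of_nonneg_right
        (mul_le_mul_of_nonneg_left h2' (by norm_num : (0:ℝ) ≤ 2)) hM0.le
      linarith
    set I₁ := ∫ x, Complex.exp (-(Complex.I * ((⟪x, ξ⟫ : ℝ) : ℂ))) * (u₁ x : ℂ) with hI₁def
    have h4 : ‖(P:ℂ)‖ ≤ ‖I₁‖ + ‖I₁ - (P:ℂ)‖ := by
      calc ‖(P:ℂ)‖ = ‖I₁ - (I₁ - (P:ℂ))‖ := by ring_nf
        _ ≤ ‖I₁‖ + ‖I₁ - (P:ℂ)‖ := norm_sub_le _ _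
    have h5 : ‖(P:ℂ)‖ = |P| := by rw [Complex.norm_real, Real.norm_eq_abs]
    have h6 : ‖I₁ - (P:ℂ)‖ ≤ |P|/4 := by
      exact le_trans h1 h2
    linarith [h4, h5.symm.le]
  -- the constant and threshold
  set V : ENNReal := volume (Metric.ball (0 : EuclideanSpace ℝ (Fin 2)) 1) with hV
  have hVpos : 0 < V := Metric.measure_ball_pos _ _ one_pos
  have hVfin : V ≠ ⊤ := measure_ball_lt_top.ne
  set v : ℝ := V.toReal with hv
  have hv0 : 0 < v := ENNReal.toReal_pos hVpos.ne' hVfin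
  refine ⟨a * v / (256 * b^2 * Λ),
    div_pos (by positivity) (mul_pos (by positivity) hΛ0),
    max (Real.exp (-2 * Real.log (a*ε/Real.pi))) 1, ?_⟩
  intro t ht
  have ht1 : 1 ≤ t := le_trans (le_max_right _ _) ht
  have ht0 : 0 < t := lt_of_lt_of_le one_pos ht1
  have htlog : -2 * Real.log (a*ε/Real.pi) ≤ Real.log t := by
    have h1 : Real.exp (-2 * Real.log (a*ε/Real.pi)) ≤ t :=
      le_trans (le_max_left _ _) ht
    have := Real.log_le_log (Real.exp_pos _) h1
    rwa [Real.log_exp] at this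
  set K : ℕ := Nat.floor (a*ε*t/Real.pi) with hKdef
  -- construction of the annuli
  have key : ∀ k : ℕ, ∃ r r', (k < K → 0 < r ∧ r < r' ∧ r' ≤ ε
      ∧ f r = ((k:ℝ)*Real.pi+Real.pi/4)/t ∧ f r' = ((k:ℝ)*Real.pi+3*Real.pi/4)/t
      ∧ ∀ s, r ≤ s → s ≤ r' →
        ((k:ℝ)*Real.pi+Real.pi/4)/t ≤ f s ∧ f s ≤ ((k:ℝ)*Real.pi+3*Real.pi/4)/t) := by
    intro k
    by_cases hk : k < K
    · have hα0 : 0 < ((k:ℝ)*Real.pi+Real.pi/4)/t := by positivity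
      have hαβ : ((k:ℝ)*Real.pi+Real.pi/4)/t < ((k:ℝ)*Real.pi+3*Real.pi/4)/t :=
        (div_lt_div_iff_of_pos_right ht0).mpr (by linarith)
      have hβfε : ((k:ℝ)*Real.pi+3*Real.pi/4)/t ≤ f ε := by
        have hk1 : ((k:ℝ)+1) ≤ (K:ℝ) := by exact_mod_cast Nat.succ_le_of_lt hk
        have hKle : (K:ℝ) ≤ a*ε*t/Real.pi := Nat.floor_le (by positivity)
        have h4 : (K:ℝ)*Real.pi ≤ a*ε*t := (le_div_iff₀ hπ).mp hKle
        have hknn : (0:ℝ) ≤ (k:ℝ) := Nat.cast_nonneg k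
        have h6 : ((k:ℝ)*Real.pi+3*Real.pi/4)/t ≤ a*ε := by
          rw [div_le_iff₀ ht0]
          have h7 := mul_le_mul_of_nonneg_right hk1 hπ.le
          have h8 : (0:ℝ) ≤ (k:ℝ) := Nat.cast_nonneg k
          linarith
        exact le_trans h6 (hfl ε hε0.le hε1)
      obtain ⟨r, r', hh⟩ := aux_hit f ε _ _ hε0 hfcont hf0 hα0 hαβ hβfε
      exact ⟨r, r', fun _ => hh⟩
    · exact ⟨1, 2, fun h => absurd h hk⟩
  choose rl ru hkey using key
  set A : ℕ → Set (EuclideanSpace ℝ (Fin 2)) :=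
    fun k => {ξ : EuclideanSpace ℝ (Fin 2) | rl k ≤ ‖ξ‖ ∧ ‖ξ‖ ≤ ru k} with hA
  have hmeas : ∀ k, MeasurableSet (A k) := by
    intro k
    have : A k = (fun ξ : EuclideanSpace ℝ (Fin 2) => ‖ξ‖) ⁻¹' (Set.Icc (rl k) (ru k)) := by
      ext ξ; simp [hA, Set.mem_Icc]
    rw [this]
    exact measurable_norm measurableSet_Icc
  set c : ℕ → ENNReal := fun k => ENNReal.ofReal (P^2/(64*b^2*(ru k)^2)) with hc
  -- pointwise lower bound
  have hpoint : ∀ ξ : EuclideanSpace ℝ (Fin 2),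
      (∑ k ∈ Finset.range K, Set.indicator (A k) (fun _ => c k) ξ)
        ≤ ENNReal.ofReal (‖w t ξ‖ ^ 2) := by
    intro ξ
    by_cases hex : ∃ k, k < K ∧ ξ ∈ A k
    · obtain ⟨k, hkK, hξk⟩ := hex
      obtain ⟨hr0, hrr', hr'ε, hfrl, hfru, hval⟩ := hkey k hkK
      have hρ1 : rl k ≤ ‖ξ‖ := hξk.1
      have hρ2 : ‖ξ‖ ≤ ru k := hξk.2
      have hρ0 : 0 < ‖ξ‖ := lt_of_lt_of_le hr0 hρ1
      have hρε : ‖ξ‖ ≤ ε := le_trans hρ2 hr'ε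
      have hρ11 : ‖ξ‖ ≤ 1 := le_trans hρε hε1
      have hfρu : f ‖ξ‖ ≤ b * ‖ξ‖ := hfu _ hρ0.le hρ11
      have hfρl : a * ‖ξ‖ ≤ f ‖ξ‖ := hfl _ hρ0.le hρ11
      have hfρ0 : 0 < f ‖ξ‖ := lt_of_lt_of_le (by positivity) hfρl
      obtain ⟨hαf, hfβ⟩ := hval ‖ξ‖ hρ1 hρ2
      -- sine bound
      have hsin : 1/2 ≤ |Real.sin (t * f ‖ξ‖)| := by
        apply aux_sin k
        · calc (k:ℝ)*Real.pi+Real.pi/4 = t * (((k:ℝ)*Real.pi+Real.pi/4)/t) := by field_simp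
          _ ≤ t * f ‖ξ‖ := mul_le_mul_of_nonneg_left hαf ht0.le
        · calc t * f ‖ξ‖ ≤ t * (((k:ℝ)*Real.pi+3*Real.pi/4)/t) :=
              mul_le_mul_of_nonneg_left hfβ ht0.le
          _ = (k:ℝ)*Real.pi+3*Real.pi/4 := by field_simp
      -- lower bound for |w t ξ|
      have habs : |P|/(8 * f ‖ξ‖) ≤ ‖w t ξ‖ := by
        rw [hw t ξ]
        set A0 : ℂ := (Real.cos (t * f ‖ξ‖) : ℂ)
          * (∫ x, Complex.exp (-(Complex.I * ((⟪x, ξ⟫ : ℝ) : ℂ))) * (u₀ x : ℂ)) with hA0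
        set B0 : ℂ := ((Real.sin (t * f ‖ξ‖) / f ‖ξ‖ : ℝ) : ℂ)
          * (∫ x, Complex.exp (-(Complex.I * ((⟪x, ξ⟫ : ℝ) : ℂ))) * (u₁ x : ℂ)) with hB0
        have htri : ‖B0‖ - ‖A0‖ ≤ ‖A0 + B0‖ := by
          have e : B0 = (A0 + B0) - A0 := by ring
          calc ‖B0‖ - ‖A0‖
              = ‖(A0 + B0) - A0‖ - ‖A0‖ := by rw [← e]
            _ ≤ (‖A0 + B0‖ + ‖A0‖) - ‖A0‖ := by
                have := norm_sub_le (A0 + B0) A0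
                linarith
            _ = ‖A0 + B0‖ := by ring
        have hA0b : ‖A0‖ ≤ K₀ := by
          rw [hA0, norm_mul, Complex.norm_real, Real.norm_eq_abs]
          calc |Real.cos (t * f ‖ξ‖)| * ‖_‖
              ≤ 1 * K₀ := mul_le_mul (Real.abs_cos_le_one _) (hI₀ ξ)
                (norm_nonneg _) zero_le_one
            _ = K₀ := one_mul _
        have hB0b : |P|/(4 * f ‖ξ‖) ≤ ‖B0‖ := by
          rw [hB0, norm_mul, Complex.norm_real, Real.norm_eq_abs, abs_div, abs_of_pos hfρ0]
          calc |P|/(4 * f ‖ξ‖) = (1/2)/(f ‖ξ‖) * (|P|/2) := by ring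
            _ ≤ |Real.sin (t * f ‖ξ‖)|/(f ‖ξ‖)
                * ‖∫ x, Complex.exp (-(Complex.I * ((⟪x, ξ⟫ : ℝ) : ℂ))) * (u₁ x : ℂ)‖ := by
              apply mul_le_mul
              · exact (div_le_div_iff_of_pos_right hfρ0).mpr hsin
              · exact hI₁ ξ hρε
              · positivity
              · positivity
        have hK₀f : K₀ ≤ |P| / (8 * f ‖ξ‖) := by
          have h1 : f ‖ξ‖ ≤ b * ε :=
            le_trans hfρu (mul_le_mul_of_nonneg_left hρε hb0.le)
          have h2 : |P| / (8*b*ε) ≤ |P| / (8 * f ‖ξ‖) := by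
            apply div_le_div_of_nonneg_left (abs_nonneg _) (by positivity) (by linarith)
          linarith [hεK₀]
        have heq : |P|/(4 * f ‖ξ‖) = 2 * (|P|/(8 * f ‖ξ‖)) := by
          field_simp; ring
        linarith [htri, hA0b, hB0b]
      -- conclude the pointwise bound
      have huniq : ∀ j ∈ Finset.range K, j ≠ k →
          Set.indicator (A j) (fun _ => c j) ξ = 0 := by
        intro j hj hjk
        apply Set.indicator_of_notMem
        intro hξj
        obtain ⟨_, _, hjε, _, _, hvalj⟩ := hkey j (Finset.mem_range.mp hj)
        obtain ⟨hαfj, hfβj⟩ := hvalj ‖ξ‖ hξj.1 hξj.2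
        rcases lt_or_gt_of_ne hjk with hlt | hlt
        · have hcast : ((j:ℝ)+1) ≤ (k:ℝ) := by exact_mod_cast Nat.succ_le_of_lt hlt
          have hmm := mul_le_mul_of_nonneg_right hcast hπ.le
          have : ((j:ℝ)*Real.pi+3*Real.pi/4)/t < ((k:ℝ)*Real.pi+Real.pi/4)/t :=
            (div_lt_div_iff_of_pos_right ht0).mpr (by linarith)
          linarith
        · have hcast : ((k:ℝ)+1) ≤ (j:ℝ) := by exact_mod_cast Nat.succ_le_of_lt hlt
          have hmm := mul_le_mul_of_nonneg_right hcast hπ.le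
          have : ((k:ℝ)*Real.pi+3*Real.pi/4)/t < ((j:ℝ)*Real.pi+Real.pi/4)/t :=
            (div_lt_div_iff_of_pos_right ht0).mpr (by linarith)
          linarith
      rw [Finset.sum_eq_single_of_mem k (Finset.mem_range.mpr hkK) huniq,
        Set.indicator_of_mem hξk]
      apply ENNReal.ofReal_le_ofReal
      have hrk0 : 0 < ru k := lt_of_lt_of_le hρ0 hρ2
      have habs2 : |P|/(8 * b * ru k) ≤ ‖w t ξ‖ := by
        refine le_trans ?_ habs
        apply div_le_div_of_nonneg_left (abs_nonneg _) (by positivity)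
        have : f ‖ξ‖ ≤ b * ru k :=
          le_trans hfρu (mul_le_mul_of_nonneg_left hρ2 hb0.le)
        linarith
      calc P^2/(64*b^2*(ru k)^2) = (|P|/(8 * b * ru k))^2 := by
            rw [div_pow, ← sq_abs P]; ring_nf
        _ ≤ ‖w t ξ‖ ^ 2 := by
          apply pow_le_pow_left₀ (by positivity) habs2
    · push_neg at hex
      have : (∑ k ∈ Finset.range K, Set.indicator (A k) (fun _ => c k) ξ) = 0 := by
        apply Finset.sum_eq_zero
        intro k hk
        exact Set.indicator_of_notMem (hex k (Finset.mem_range.mp hk)) _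
      rw [this]
      exact bot_le
  -- lower bound for the integral of each indicator
  have hsum1 : ∀ k ∈ Finset.range K,
      ENNReal.ofReal ((P^2*a*v/(128*b^2*Λ)) * (1/((k:ℝ)+1)))
        ≤ ∫⁻ ξ, Set.indicator (A k) (fun _ => c k) ξ := by
    intro k hk
    obtain ⟨hr0, hrr', hr'ε, hfrl, hfru, hval⟩ := hkey k (Finset.mem_range.mp hk)
    have hr'0 : 0 < ru k := lt_trans hr0 hrr'
    have hr'1 : ru k ≤ 1 := le_trans hr'ε hε1
    -- geometric bounds
    have hlip : Real.pi/(2*t*Λ) ≤ ru k - rl k := by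
      have h1 : f (ru k) - f (rl k) ≤ Λ * (ru k - rl k) :=
        hflip (rl k) (ru k) hr0.le hrr'.le hr'1
      have h2 : f (ru k) - f (rl k) = (Real.pi/2)/t := by
        rw [hfru, hfrl]; field_simp; ring
      rw [h2] at h1
      have h2tΛ : (0:ℝ) < 2*t*Λ := mul_pos (by positivity) hΛ0
      rw [div_le_iff₀ h2tΛ]
      calc Real.pi = ((Real.pi/2)/t) * (2*t) := by field_simp
        _ ≤ (Λ * (ru k - rl k)) * (2*t) := by
          apply mul_le_mul_of_nonneg_right h1 (by positivity)
        _ = (ru k - rl k) * (2*t*Λ) := by ring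
    have hr'up : ru k ≤ ((k:ℝ)+1)*Real.pi/(a*t) := by
      have h1 : a * ru k ≤ f (ru k) := hfl _ hr'0.le hr'1
      rw [hfru] at h1
      rw [le_div_iff₀ (by positivity)]
      calc ru k * (a*t) = (a * ru k) * t := by ring
        _ ≤ (((k:ℝ)*Real.pi+3*Real.pi/4)/t) * t := mul_le_mul_of_nonneg_right h1 ht0.le
        _ = (k:ℝ)*Real.pi+3*Real.pi/4 := by field_simp
        _ ≤ ((k:ℝ)+1)*Real.pi := by linarith
    -- measure of the annulus
    have hAk : A k = Metric.closedBall (0 : EuclideanSpace ℝ (Fin 2)) (ru k)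
        \ Metric.ball (0 : EuclideanSpace ℝ (Fin 2)) (rl k) := by
      ext ξ
      simp only [hA, Set.mem_setOf_eq, Set.mem_diff, Metric.mem_closedBall, Metric.mem_ball,
        dist_zero_right, not_lt]
      tauto
    have hsubset : Metric.ball (0 : EuclideanSpace ℝ (Fin 2)) (rl k)
        ⊆ Metric.closedBall (0 : EuclideanSpace ℝ (Fin 2)) (ru k) :=
      le_trans Metric.ball_subset_closedBall (Metric.closedBall_subset_closedBall hrr'.le)
    have hvol : volume (A k) = ENNReal.ofReal ((ru k)^2) * V - ENNReal.ofReal ((rl k)^2) * V := by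
      rw [hAk, measure_diff hsubset measurableSet_ball.nullMeasurableSet measure_ball_lt_top.ne]
      rw [Measure.addHaar_closedBall _ _ hr'0.le, Measure.addHaar_ball _ _ hr0.le]
      rw [finrank_euclideanSpace_fin]
    have hvol2 : ENNReal.ofReal ((ru k)^2 - (rl k)^2) * V ≤ volume (A k) := by
      rw [hvol]
      apply ENNReal.le_sub_of_add_le_right
        (ENNReal.mul_ne_top ENNReal.ofReal_ne_top hVfin)
      have hsq2 : (rl k)^2 ≤ (ru k)^2 := pow_le_pow_left₀ hr0.le hrr'.le 2
      rw [← add_mul, ← ENNReal.ofReal_add (by linarith) (by positivity)]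
      rw [sub_add_cancel]
    rw [lintegral_indicator_const (hmeas k)]
    calc ENNReal.ofReal ((P^2*a*v/(128*b^2*Λ)) * (1/((k:ℝ)+1)))
        ≤ ENNReal.ofReal ((P^2/(64*b^2*(ru k)^2)) * (((ru k)^2-(rl k)^2) * v)) := by
          apply ENNReal.ofReal_le_ofReal
          -- real arithmetic
          have h3 : (ru k - rl k)/(ru k) ≤ ((ru k)^2 - (rl k)^2)/((ru k)^2) := by
            rw [div_le_div_iff₀ hr'0 (by positivity)]
            have hint : 0 ≤ ru k * rl k * (ru k - rl k) :=
              mul_nonneg (mul_nonneg hr'0.le hr0.le) (sub_nonneg.mpr hrr'.le)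
            nlinarith [hint]
          have h2Λk : (0:ℝ) < 2*Λ*((k:ℝ)+1) := mul_pos (mul_pos two_pos hΛ0) (by positivity)
          have h4 : a/(2*Λ*((k:ℝ)+1)) ≤ (ru k - rl k)/(ru k) := by
            rw [div_le_div_iff₀ h2Λk hr'0]
            have h5 : a * ru k ≤ ((k:ℝ)+1)*Real.pi/t := by
              calc a * ru k ≤ a * (((k:ℝ)+1)*Real.pi/(a*t)) :=
                  mul_le_mul_of_nonneg_left hr'up ha0.le
                _ = ((k:ℝ)+1)*Real.pi/t := by field_simp
            have h6 : ((k:ℝ)+1)*Real.pi/t ≤ (ru k - rl k)*(2*Λ*((k:ℝ)+1)) := by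
              calc ((k:ℝ)+1)*Real.pi/t = (Real.pi/(2*t*Λ))*(2*Λ*((k:ℝ)+1)) := by
                    field_simp
                _ ≤ (ru k - rl k)*(2*Λ*((k:ℝ)+1)) :=
                  mul_le_mul_of_nonneg_right hlip h2Λk.le
            linarith
          have h7 := le_trans h4 h3
          calc (P^2*a*v/(128*b^2*Λ)) * (1/((k:ℝ)+1))
              = (P^2*v/(64*b^2)) * (a/(2*Λ*((k:ℝ)+1))) := by
                have hd1 : (0:ℝ) < 128*b^2*Λ*((k:ℝ)+1) :=
                  mul_pos (mul_pos (by positivity) hΛ0) (by positivity)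
                have hd2 : (0:ℝ) < 64*b^2*(2*Λ*((k:ℝ)+1)) := mul_pos (by positivity) h2Λk
                rw [mul_one_div, div_div, div_mul_div_comm,
                  div_eq_div_iff hd1.ne' hd2.ne']
                ring
            _ ≤ (P^2*v/(64*b^2)) * (((ru k)^2 - (rl k)^2)/((ru k)^2)) := by
              apply mul_le_mul_of_nonneg_left h7 (by positivity)
            _ = (P^2/(64*b^2*(ru k)^2)) * (((ru k)^2-(rl k)^2) * v) := by
              field_simp
      _ = ENNReal.ofReal (P^2/(64*b^2*(ru k)^2)) * (ENNReal.ofReal ((ru k)^2-(rl k)^2)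
          * ENNReal.ofReal v) := by
          have hsq2 : (0:ℝ) ≤ (ru k)^2 - (rl k)^2 :=
            sub_nonneg.mpr (pow_le_pow_left₀ hr0.le hrr'.le 2)
          rw [ENNReal.ofReal_mul (by positivity : (0:ℝ) ≤ P^2/(64*b^2*(ru k)^2)),
            ENNReal.ofReal_mul hsq2]
      _ ≤ ENNReal.ofReal (P^2/(64*b^2*(ru k)^2)) * (ENNReal.ofReal ((ru k)^2-(rl k)^2) * V) := by
          apply mul_le_mul_right (mul_le_mul_right ?_ _)
          rw [hv]
          exact ENNReal.ofReal_toReal_le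
      _ ≤ ENNReal.ofReal (P^2/(64*b^2*(ru k)^2)) * volume (A k) :=
          mul_le_mul_right hvol2 _
      _ = c k * volume (A k) := rfl
  -- final chain
  have hKlarge : Real.log t ≤ 2 * Real.log ((K:ℝ)+1) := by
    have h1 : a*ε*t/Real.pi < (K:ℝ)+1 := Nat.lt_floor_add_one _
    have h2 : Real.log (a*ε*t/Real.pi) ≤ Real.log ((K:ℝ)+1) :=
      Real.log_le_log (by positivity) h1.le
    have h3 : a*ε*t/Real.pi = (a*ε/Real.pi) * t := by ring
    rw [h3, Real.log_mul (by positivity) ht0.ne'] at h2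
    linarith
  calc ENNReal.ofReal (a * v / (256 * b^2 * Λ) * P ^ 2 * Real.log t)
      ≤ ENNReal.ofReal (∑ k ∈ Finset.range K, (P^2*a*v/(128*b^2*Λ)) * (1/((k:ℝ)+1))) := by
        apply ENNReal.ofReal_le_ofReal
        have h1 : ∑ k ∈ Finset.range K, (P^2*a*v/(128*b^2*Λ)) * (1/((k:ℝ)+1))
            = (P^2*a*v/(128*b^2*Λ)) * ∑ k ∈ Finset.range K, (1:ℝ)/((k:ℝ)+1) :=
          (Finset.mul_sum _ _ _).symm
        rw [h1]
        have h2 : Real.log ((K:ℝ)+1) ≤ ∑ k ∈ Finset.range K, (1:ℝ)/((k:ℝ)+1) :=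
          aux_harm K
        have h3 : (0:ℝ) ≤ P^2*a*v/(128*b^2*Λ) :=
          div_nonneg (by positivity) (le_of_lt (mul_pos (by positivity) hΛ0))
        calc a * v / (256 * b^2 * Λ) * P ^ 2 * Real.log t
            = (P^2*a*v/(128*b^2*Λ)) * (Real.log t / 2) := by ring
          _ ≤ (P^2*a*v/(128*b^2*Λ)) * Real.log ((K:ℝ)+1) := by
            apply mul_le_mul_of_nonneg_left (by linarith) h3
          _ ≤ _ := mul_le_mul_of_nonneg_left h2 h3
    _ = ∑ k ∈ Finset.range K, ENNReal.ofReal ((P^2*a*v/(128*b^2*Λ)) * (1/((k:ℝ)+1))) :=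
        ENNReal.ofReal_sum_of_nonneg (fun k _ => mul_nonneg
          (div_nonneg (by positivity) (le_of_lt (mul_pos (by positivity) hΛ0)))
          (by positivity))
    _ ≤ ∑ k ∈ Finset.range K, ∫⁻ ξ, Set.indicator (A k) (fun _ => c k) ξ :=
        Finset.sum_le_sum hsum1
    _ = ∫⁻ ξ, ∑ k ∈ Finset.range K, Set.indicator (A k) (fun _ => c k) ξ :=
        (lintegral_finset_sum _ (fun k _ => (measurable_const.indicator (hmeas k)))).symm
    _ ≤ ∫⁻ ξ, ENNReal.ofReal (‖w t ξ‖ ^ 2) := lintegral_mono hpoint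
end
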